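/- arXiv:1906.07053 — 12 statements merged into one kernel-verified Lean document; each statement's English description precedes it below -/
import Mathlib

section
/- Let X be a spectral space with specialization order ≤, and let Y ⊆ X be a subset such that every nonempty finite subset of Y has a supremum in X. Then every nonempty subset Z of Y has a supremum in X, and this supremum belongs to the closure, in the constructible (patch) topology of X, of the set of suprema of nonempty finite subsets of Y. -/
open Set TopologicalSpace

/-- A topology `t` on `X` makes `X` a spectral space: quasi-compact, `T0`, sober, with a basis
of quasi-compact open sets closed under finite (binary) intersections. -/
def IsSpectral (X : Type*) (t : TopologicalSpace X) : Prop :=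
  @CompactSpace X t ∧ @T0Space X t ∧ @QuasiSober X t ∧
    ∃ B : Set (Set X),
      (∀ s ∈ B, @IsCompact X t s ∧ @IsOpen X t s) ∧
      (∀ s ∈ B, ∀ u ∈ B, s ∩ u ∈ B) ∧
      @TopologicalSpace.IsTopologicalBasis X t B

/-- The specialization order of a topology: `x ≤ y` iff `y ∈ closure {x}`. -/
def specLE {X : Type*} (t : TopologicalSpace X) (x y : X) : Prop := y ∈ @closure X t {x}

/-- `b` is the supremum of `S` with respect to the specialization order of `t`. -/
def IsSupSpec {X : Type*} (t : TopologicalSpace X) (S : Set X) (b : X) : Prop :=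
  (∀ x ∈ S, specLE t x b) ∧ ∀ c, (∀ x ∈ S, specLE t x c) → specLE t b c

/-- `b` is the infimum of `S` with respect to the specialization order of `t`. -/
def IsInfSpec {X : Type*} (t : TopologicalSpace X) (S : Set X) (b : X) : Prop :=
  (∀ x ∈ S, specLE t b x) ∧ ∀ c, (∀ x ∈ S, specLE t c x) → specLE t c b

/-- The constructible (patch) topology associated to a topology `t`: the coarsest topology in
which all quasi-compact `t`-open sets are clopen. -/
def patchOf {X : Type*} (t : TopologicalSpace X) : TopologicalSpace X :=
  TopologicalSpace.generateFrom
    {s : Set X | (@IsCompact X t s ∧ @IsOpen X t s) ∨ (@IsCompact X t sᶜ ∧ @IsOpen X t sᶜ)}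

/-- Closure with respect to the constructible (patch) topology of `t`. -/
def patchClosure {X : Type*} (t : TopologicalSpace X) (Y : Set X) : Set X :=
  @closure X (patchOf t) Y

lemma aux_mem_closure {X : Type*} [τ : TopologicalSpace X] {S : Set X} {a : X}
    (h : ∀ o, IsOpen o → a ∈ o → (o ∩ S).Nonempty) : a ∈ closure S := mem_closure_iff.mpr h

lemma specLE_mem_open {X : Type*} [t : TopologicalSpace X] {x y : X} (h : specLE t x y)
    {U : Set X} (hU : IsOpen U) (hy : y ∈ U) : x ∈ U := by
  obtain ⟨p, hpU, hpx⟩ := mem_closure_iff.mp h U hU hy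
  exact (mem_singleton_iff.mp hpx) ▸ hpU

theorem stmt0 {X : Type*} [t : TopologicalSpace X] (hX : IsSpectral X t) (Y : Set X)
    (hf : ∀ F : Set X, F ⊆ Y → F.Finite → F.Nonempty → ∃ b, IsSupSpec t F b) :
    ∀ Z : Set X, Z ⊆ Y → Z.Nonempty →
      ∃ b, IsSupSpec t Z b ∧
        b ∈ patchClosure t
          {x | ∃ F : Set X, F ⊆ Y ∧ F.Finite ∧ F.Nonempty ∧ IsSupSpec t F x} := by
  classical
  obtain ⟨hcomp, ht0, hsober, B, hB1, hB2, hBbasis⟩ := hX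
  haveI := hcomp
  haveI := hsober
  intro Z hZY hZne
  obtain ⟨z₀, hz₀⟩ := hZne
  set ι := {F : Set X // F ⊆ Z ∧ F.Finite ∧ F.Nonempty} with hιdef
  have hι : Nonempty ι :=
    ⟨⟨{z₀}, singleton_subset_iff.mpr hz₀, finite_singleton _, singleton_nonempty _⟩⟩
  have hchoice : ∀ F : ι, ∃ b, IsSupSpec t F.1 b :=
    fun F => hf F.1 (F.2.1.trans hZY) F.2.2.1 F.2.2.2
  choose s hs using hchoice
  have hmono : ∀ F F' : ι, F.1 ⊆ F'.1 → specLE t (s F) (s F') :=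
    fun F F' hFF' => (hs F).2 (s F') (fun x hx => (hs F').1 x (hFF' hx))
  set C := ⋂ F : ι, closure {s F} with hCdef
  have hCclosed : IsClosed C := isClosed_iInter fun F => isClosed_closure
  -- key finite-intersection-property argument
  have key : ∀ K : Set X, IsCompact K → (∀ F : ι, (K ∩ closure {s F}).Nonempty) →
      (K ∩ C).Nonempty := by
    intro K hK hKF
    apply hK.inter_iInter_nonempty _ (fun F => isClosed_closure)
    intro u
    obtain ⟨F₁⟩ := hι
    have hGZ : (F₁.1 ∪ ⋃ F ∈ u, (F : ι).1) ⊆ Z :=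
      union_subset F₁.2.1 (iUnion₂_subset fun F _ => F.2.1)
    have hGfin : (F₁.1 ∪ ⋃ F ∈ u, (F : ι).1).Finite :=
      F₁.2.2.1.union (u.finite_toSet.biUnion fun F _ => F.2.2.1)
    have hGne : (F₁.1 ∪ ⋃ F ∈ u, (F : ι).1).Nonempty := F₁.2.2.2.mono subset_union_left
    set G' : ι := ⟨_, hGZ, hGfin, hGne⟩ with hG'def
    obtain ⟨p, hpK, hp⟩ := hKF G'
    refine ⟨p, hpK, ?_⟩
    simp only [mem_iInter]
    intro F hF
    have hsub : F.1 ⊆ G'.1 := fun w hw => subset_union_right (mem_iUnion₂.mpr ⟨F, hF, hw⟩)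
    exact closure_minimal (singleton_subset_iff.mpr (hmono F G' hsub)) isClosed_closure hp
  have hCne : C.Nonempty := by
    have h := key univ isCompact_univ (fun F => ⟨s F, mem_univ _, subset_closure rfl⟩)
    rwa [univ_inter] at h
  have hCpre : IsPreirreducible C := by
    rintro U V hU hV ⟨x, hxC, hxU⟩ ⟨y, hyC, hyV⟩
    obtain ⟨U', hU'B, hxU', hU'sub⟩ := hBbasis.exists_subset_of_mem_open hxU hU
    obtain ⟨V', hV'B, hyV', hV'sub⟩ := hBbasis.exists_subset_of_mem_open hyV hV
    have hUV' : U' ∩ V' ∈ B := hB2 _ hU'B _ hV'B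
    have hcpt : IsCompact (U' ∩ V') := (hB1 _ hUV').1
    have hmeet : ∀ F : ι, ((U' ∩ V') ∩ closure {s F}).Nonempty := by
      intro F
      have hirr : IsPreirreducible (closure {s F}) := isIrreducible_singleton.closure.2
      have h1 : (closure {s F} ∩ U').Nonempty := ⟨x, mem_iInter.mp hxC F, hxU'⟩
      have h2 : (closure {s F} ∩ V').Nonempty := ⟨y, mem_iInter.mp hyC F, hyV'⟩
      obtain ⟨p, hp1, hp2⟩ := hirr U' V' (hB1 _ hU'B).2 (hB1 _ hV'B).2 h1 h2
      exact ⟨p, hp2, hp1⟩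
    obtain ⟨p, hpUV, hpC⟩ := key (U' ∩ V') hcpt hmeet
    exact ⟨p, hpC, hU'sub hpUV.1, hV'sub hpUV.2⟩
  obtain ⟨b, hb⟩ := QuasiSober.sober ⟨hCne, hCpre⟩ hCclosed
  have hbC : b ∈ C := by rw [← hb]; exact subset_closure rfl
  have hsup : IsSupSpec t Z b := by
    constructor
    · intro z hz
      set Fz : ι := ⟨{z}, singleton_subset_iff.mpr hz, finite_singleton _, singleton_nonempty _⟩
      have h1 : specLE t z (s Fz) := (hs Fz).1 z rfl
      have h2 : b ∈ closure {s Fz} := mem_iInter.mp hbC Fz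
      exact closure_minimal (singleton_subset_iff.mpr h1) isClosed_closure h2
    · intro c hc
      have hcC : c ∈ C := mem_iInter.mpr fun F => (hs F).2 c (fun x hx => hc x (F.2.1 hx))
      show c ∈ closure {b}
      rw [hb]; exact hcC
  refine ⟨b, hsup, ?_⟩
  -- the "eventually" lemma for patch-open sets
  have hev : ∀ O : Set X,
      TopologicalSpace.GenerateOpen
        {s : Set X | (IsCompact s ∧ IsOpen s) ∨ (IsCompact sᶜ ∧ IsOpen sᶜ)} O →
      b ∈ O → ∃ F₀ : ι, ∀ F : ι, F₀.1 ⊆ F.1 → s F ∈ O := by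
    intro O hO
    induction hO with
    | basic u hu =>
      intro hbu
      rcases hu with ⟨hcpt, hop⟩ | ⟨hcpt, hop⟩
      · obtain ⟨F₁⟩ := hι
        exact ⟨F₁, fun F _ =>
          specLE_mem_open (show specLE t (s F) b from mem_iInter.mp hbC F) hop hbu⟩
      · by_contra h
        push_neg at h
        have hall : ∀ F₀ : ι, s F₀ ∈ uᶜ := by
          intro F₀
          obtain ⟨F, hsub, hF⟩ := h F₀
          exact specLE_mem_open (hmono F₀ F hsub) hop hF
        obtain ⟨p, hpu, hpC⟩ := key uᶜ hcpt (fun F => ⟨s F, hall F, subset_closure rfl⟩)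
        have hpb : p ∈ closure {b} := by rw [hb]; exact hpC
        exact (specLE_mem_open (show specLE t b p from hpb) hop hpu) hbu
    | univ =>
      intro _
      obtain ⟨F₁⟩ := hι
      exact ⟨F₁, fun F _ => trivial⟩
    | inter u v hu hv ihu ihv =>
      intro hb'
      obtain ⟨F₁, h1⟩ := ihu hb'.1
      obtain ⟨F₂, h2⟩ := ihv hb'.2
      refine ⟨⟨F₁.1 ∪ F₂.1, union_subset F₁.2.1 F₂.2.1, F₁.2.2.1.union F₂.2.2.1,
        F₁.2.2.2.mono subset_union_left⟩, ?_⟩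
      intro F hF
      exact ⟨h1 F (subset_union_left.trans hF), h2 F (subset_union_right.trans hF)⟩
    | sUnion S hS ihS =>
      intro hb'
      obtain ⟨u, huS, hbu⟩ := hb'
      obtain ⟨F₀, h0⟩ := ihS u huS hbu
      exact ⟨F₀, fun F hF => ⟨u, huS, h0 F hF⟩⟩
  refine @aux_mem_closure X (patchOf t) _ _ ?_
  intro o ho hbo
  obtain ⟨F₀, h0⟩ := hev o ho hbo
  exact ⟨s F₀, h0 F₀ (subset_refl _), F₀.1, F₀.2.1.trans hZY, F₀.2.2.1, F₀.2.2.2, hs F₀⟩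
end

section
/- Let X be a spectral space and Y ⊆ X a subset such that every nonempty finite subset of Y has a supremum in X (with respect to the specialization order). Then the set Y_f of suprema of nonempty finite subsets of Y and the set Y_∞ of suprema of arbitrary nonempty subsets of Y have the same closure in the constructible topology of X. -/
open Set TopologicalSpace

section Aux
variable {X : Type*} [t : TopologicalSpace X]

variable {X : Type*} [t : TopologicalSpace X]

lemma open_mem_of_closure {x y : X} {U : Set X} (h : y ∈ closure ({x} : Set X))
    (hU : IsOpen U) (hy : y ∈ U) : x ∈ U := by
  rcases mem_closure_iff.1 h U hU hy with ⟨z, hzU, hz⟩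
  rcases hz with rfl; exact hzU

/-- core lemma: one quasi-compact open avoided by the sup of Z can be avoided by the
sup of a finite subset. -/
lemma core (V : Set X) (hVc : IsCompact V) (hVo : IsOpen V)
    (Z : Set X) (hZ : Z.Nonempty) (b : X) (hb : IsSupSpec t Z b) (hbV : b ∉ V)
    (hf : ∀ F : Set X, F ⊆ Z → F.Finite → F.Nonempty → ∃ c, IsSupSpec t F c) :
    ∃ F : Set X, F ⊆ Z ∧ F.Finite ∧ F.Nonempty ∧ ∃ c, IsSupSpec t F c ∧ c ∉ V := by
  by_contra h
  push_neg at h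
  obtain ⟨x₀, hx₀⟩ := hZ
  have key : (V ∩ ⋂ i : Z, closure ({(i : X)} : Set X)).Nonempty := by
    apply hVc.inter_iInter_nonempty _ (fun i => isClosed_closure)
    intro u
    set F : Set X := insert x₀ (Subtype.val '' (u : Set Z)) with hF
    have hFZ : F ⊆ Z := by
      rintro x (rfl | ⟨i, _, rfl⟩); · exact hx₀
      · exact i.2
    have hFfin : F.Finite := (u.finite_toSet.image _).insert x₀
    have hFne : F.Nonempty := ⟨x₀, mem_insert _ _⟩
    obtain ⟨c, hc⟩ := hf F hFZ hFfin hFne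
    refine ⟨c, h F hFZ hFfin hFne c hc, ?_⟩
    simp only [mem_iInter]
    intro i hi
    exact hc.1 i (by exact mem_insert_of_mem _ ⟨i, hi, rfl⟩)
  obtain ⟨a, haV, ha⟩ := key
  simp only [mem_iInter] at ha
  have hub : ∀ x ∈ Z, specLE t x a := fun x hx => ha ⟨x, hx⟩
  have : specLE t b a := hb.2 a hub
  exact hbV (open_mem_of_closure this hVo haV)


end Aux

lemma patchClosure_mono {X : Type*} (t : TopologicalSpace X) {A B : Set X} (h : A ⊆ B) :
    patchClosure t A ⊆ patchClosure t B := by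
  letI := patchOf t; exact closure_mono h

lemma patchClosure_idem {X : Type*} (t : TopologicalSpace X) (A : Set X) :
    patchClosure t (patchClosure t A) = patchClosure t A := by
  letI := patchOf t; exact closure_closure

theorem stmt1 {X : Type*} [t : TopologicalSpace X] (hX : IsSpectral X t) (Y : Set X)
    (hf : ∀ F : Set X, F ⊆ Y → F.Finite → F.Nonempty → ∃ b, IsSupSpec t F b) :
    patchClosure t {x | ∃ F : Set X, F ⊆ Y ∧ F.Finite ∧ F.Nonempty ∧ IsSupSpec t F x} =
      patchClosure t {x | ∃ Z : Set X, Z ⊆ Y ∧ Z.Nonempty ∧ IsSupSpec t Z x} := by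
  set Yf := {x | ∃ F : Set X, F ⊆ Y ∧ F.Finite ∧ F.Nonempty ∧ IsSupSpec t F x} with hYf
  set Yi := {x | ∃ Z : Set X, Z ⊆ Y ∧ Z.Nonempty ∧ IsSupSpec t Z x} with hYi
  have h1 : Yf ⊆ Yi := by
    rintro x ⟨F, hFY, hFfin, hFne, hsup⟩
    exact ⟨F, hFY, hFne, hsup⟩
  -- key : Yi ⊆ patchClosure t Yf
  have h2 : Yi ⊆ patchClosure t Yf := by
    rintro b ⟨Z, hZY, hZne, hb⟩
    unfold patchClosure
    set S : Set (Set X) :=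
      {s : Set X | (@IsCompact X t s ∧ @IsOpen X t s) ∨ (@IsCompact X t sᶜ ∧ @IsOpen X t sᶜ)}
    have hbasis := @isTopologicalBasis_of_subbasis X (patchOf t) S rfl
    rw [@TopologicalSpace.IsTopologicalBasis.mem_closure_iff X (patchOf t) _ hbasis Yf b]
    rintro o ⟨f, ⟨hffin, hfS⟩, rfl⟩ hbo
    rw [mem_sInter] at hbo
    -- for each s in f with sᶜ quasi-compact open, choose a finite subset of Z
    have choice : ∀ s ∈ f, @IsCompact X t sᶜ ∧ @IsOpen X t sᶜ →
        ∃ F : Set X, F ⊆ Z ∧ F.Finite ∧ F.Nonempty ∧ ∃ c, IsSupSpec t F c ∧ c ∉ sᶜ := by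
      intro s hs hsc
      exact core sᶜ hsc.1 hsc.2 Z hZne b hb
        (fun hmem => hmem (hbo s hs))
        (fun F hFZ => hf F (hFZ.trans hZY))
    classical
    choose! G hGZ hGfin hGne cG hcG hcGV using choice
    obtain ⟨x₀, hx₀⟩ := hZne
    set f₂ : Set (Set X) := {s ∈ f | @IsCompact X t sᶜ ∧ @IsOpen X t sᶜ} with hf₂
    have hf₂fin : f₂.Finite := hffin.subset (sep_subset _ _)
    set F : Set X := insert x₀ (⋃ s ∈ f₂, G s) with hFdef
    have hFZ : F ⊆ Z := by
      rintro x (rfl | hx); · exact hx₀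
      · simp only [mem_iUnion] at hx
        obtain ⟨s, hs, hxs⟩ := hx
        exact hGZ s hs.1 hs.2 hxs
    have hFfin : F.Finite :=
      ((hf₂fin.biUnion (fun s hs => hGfin s hs.1 hs.2)).insert x₀)
    have hFne : F.Nonempty := ⟨x₀, mem_insert _ _⟩
    obtain ⟨c, hc⟩ := hf F (hFZ.trans hZY) hFfin hFne
    refine ⟨c, ?_, ⟨F, hFZ.trans hZY, hFfin, hFne, hc⟩⟩
    -- c ∈ every member of f
    rw [mem_sInter]
    intro s hs
    rcases hfS hs with hqc | hqcc
    · -- s is open; b ∈ s; c ≤ b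
      have hcb : specLE t c b := hc.2 b (fun x hx => hb.1 x (hFZ hx))
      exact open_mem_of_closure hcb hqc.2 (hbo s hs)
    · -- sᶜ quasi-compact open; cG s ∉ sᶜ and cG s ≤ c
      have hsf₂ : s ∈ f₂ := ⟨hs, hqcc⟩
      have hsub : G s ⊆ F := fun x hx =>
        mem_insert_of_mem _ (mem_biUnion hsf₂ hx)
      have hle : specLE t (cG s hs hqcc) c :=
        (hcG s hs hqcc).2 c (fun x hx => hc.1 x (hsub hx))
      by_contra hcs
      exact hcGV s hs hqcc (open_mem_of_closure hle hqcc.2 hcs)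
  apply subset_antisymm
  · exact patchClosure_mono t h1
  · calc patchClosure t Yi ⊆ patchClosure t (patchClosure t Yf) := patchClosure_mono t h2
      _ = patchClosure t Yf := patchClosure_idem t Yf
end

section
/- Let X be a spectral space whose specialization order is a total order, and let Y ⊆ X be nonempty. Then the closure of Y in the constructible topology equals Y_∞ ∪ Y_(∞), where Y_∞ is the set of suprema of nonempty subsets of Y and Y_(∞) is the set of infima of nonempty subsets of Y. In particular, Y is closed in the constructible topology if and only if the supremum and infimum of every nonempty subset of Y belong to Y. -/
open Set TopologicalSpace

section Aux

variable {X : Type*} [t : TopologicalSpace X]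

lemma sle_iff {x y : X} : specLE t x y ↔ x ⤳ y := specializes_iff_mem_closure.symm

lemma sle_refl (x : X) : specLE t x x := sle_iff.2 (specializes_refl x)

lemma sle_trans {x y z : X} (h1 : specLE t x y) (h2 : specLE t y z) : specLE t x z :=
  sle_iff.2 ((sle_iff.1 h1).trans (sle_iff.1 h2))

lemma sle_antisymm [T0Space X] {x y : X} (h1 : specLE t x y) (h2 : specLE t y x) : x = y :=
  ((sle_iff.1 h1).antisymm (sle_iff.1 h2)).eq

lemma open_down {U : Set X} (hU : IsOpen U) {z x : X} (h : specLE t z x) (hx : x ∈ U) :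
    z ∈ U := by
  obtain ⟨w, hw1, hw2⟩ := mem_closure_iff.1 h U hU hx
  exact hw2 ▸ hw1

lemma sle_closure_subset {x y : X} (h : specLE t x y) :
    closure ({y} : Set X) ⊆ closure ({x} : Set X) :=
  closure_minimal (Set.singleton_subset_iff.2 h) isClosed_closure

lemma qc_eq_finite_union {B : Set (Set X)} (hB1 : ∀ s ∈ B, IsCompact s ∧ IsOpen s)
    (hB3 : IsTopologicalBasis B) {U : Set X} (hUc : IsCompact U) (hUo : IsOpen U) :
    ∃ F : Finset (Set X), ↑F ⊆ B ∧ U = ⋃ s ∈ F, s := by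
  classical
  obtain ⟨S, hSB, hUeq⟩ := hB3.open_eq_sUnion hUo
  have hcov : U ⊆ ⋃ s : S, (s : Set X) := by
    rw [hUeq, sUnion_eq_iUnion]
  obtain ⟨F, hF⟩ := hUc.elim_finite_subcover (fun s : S => (s : Set X))
    (fun s => (hB1 s (hSB s.2)).2) hcov
  refine ⟨F.image Subtype.val, ?_, subset_antisymm ?_ ?_⟩
  · intro b hb
    obtain ⟨s, _, rfl⟩ := Finset.mem_image.1 (by exact_mod_cast hb)
    exact hSB s.2
  · intro x hx
    obtain ⟨s, hsF, hxs⟩ := mem_iUnion₂.1 (hF hx)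
    exact mem_iUnion₂.2 ⟨s, Finset.mem_image_of_mem _ hsF, hxs⟩
  · intro x hx
    obtain ⟨b, hbF, hxb⟩ := mem_iUnion₂.1 hx
    obtain ⟨s, _, rfl⟩ := Finset.mem_image.1 hbF
    rw [hUeq]
    exact ⟨s, s.2, hxb⟩

lemma qc_inter {B : Set (Set X)} (hB1 : ∀ s ∈ B, IsCompact s ∧ IsOpen s)
    (hB2 : ∀ s ∈ B, ∀ u ∈ B, s ∩ u ∈ B) (hB3 : IsTopologicalBasis B)
    {U V : Set X} (hUc : IsCompact U) (hUo : IsOpen U) (hVc : IsCompact V) (hVo : IsOpen V) :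
    IsCompact (U ∩ V) := by
  obtain ⟨F, hFB, hUeq⟩ := qc_eq_finite_union hB1 hB3 hUc hUo
  obtain ⟨G, hGB, hVeq⟩ := qc_eq_finite_union hB1 hB3 hVc hVo
  have heq : U ∩ V = ⋃ b ∈ F, ⋃ c ∈ G, b ∩ c := by
    rw [hUeq, hVeq]; ext x
    simp only [mem_inter_iff, mem_iUnion, exists_prop]
    tauto
  rw [heq]
  exact F.isCompact_biUnion fun b hb => G.isCompact_biUnion fun c hc =>
    (hB1 _ (hB2 b (hFB hb) c (hGB hc))).1

lemma qc_biInter [CompactSpace X] {B : Set (Set X)} (hB1 : ∀ s ∈ B, IsCompact s ∧ IsOpen s)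
    (hB2 : ∀ s ∈ B, ∀ u ∈ B, s ∩ u ∈ B) (hB3 : IsTopologicalBasis B)
    {F : Set (Set X)} (hFfin : F.Finite) (hF : ∀ s ∈ F, IsCompact s ∧ IsOpen s) :
    IsCompact (⋂ s ∈ F, s) ∧ IsOpen (⋂ s ∈ F, s) := by
  classical
  refine Set.Finite.induction_on (motive := fun F _ => (∀ s ∈ F, IsCompact s ∧ IsOpen s) →
      IsCompact (⋂ s ∈ F, s) ∧ IsOpen (⋂ s ∈ F, s)) F hFfin ?_ ?_ hF
  · intro _
    rw [show (⋂ s ∈ (∅ : Set (Set X)), s) = univ by simp]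
    exact ⟨isCompact_univ, isOpen_univ⟩
  · intro a F' ha hFfin' ih hF'
    rw [Set.biInter_insert]
    have h1 := ih fun s hs => hF' s (Set.mem_insert_of_mem _ hs)
    have h2 := hF' a (Set.mem_insert a F')
    exact ⟨qc_inter hB1 hB2 hB3 h2.1 h2.2 h1.1 h1.2, h2.2.inter h1.2⟩

lemma sep [T0Space X] {B : Set (Set X)} (hB1 : ∀ s ∈ B, IsCompact s ∧ IsOpen s)
    (hB3 : IsTopologicalBasis B) {s x : X} (hsx : specLE t s x) (hne : x ≠ s) :
    ∃ W, IsCompact W ∧ IsOpen W ∧ s ∈ W ∧ x ∉ W := by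
  have hns : s ∉ closure ({x} : Set X) := fun h => hne (sle_antisymm h hsx)
  obtain ⟨W, hWB, hsW, hWsub⟩ := hB3.exists_subset_of_mem_open hns
    (isClosed_closure (s := ({x} : Set X))).isOpen_compl
  exact ⟨W, (hB1 W hWB).1, (hB1 W hWB).2, hsW, fun hxW => hWsub hxW (subset_closure rfl)⟩

variable (htot : ∀ x y : X, specLE t x y ∨ specLE t y x)

include htot

lemma finset_max : ∀ (F : Finset X), F.Nonempty → ∃ m ∈ F, ∀ a ∈ F, specLE t a m := by
  classical
  intro F
  induction F using Finset.induction_on with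
  | empty => rintro ⟨x, hx⟩; simp at hx
  | @insert b F hb ih =>
    intro _
    by_cases hFe : F.Nonempty
    · obtain ⟨m, hmF, hm⟩ := ih hFe
      rcases htot b m with h | h
      · refine ⟨m, Finset.mem_insert_of_mem hmF, fun a ha => ?_⟩
        rcases Finset.mem_insert.1 ha with rfl | ha
        · exact h
        · exact hm a ha
      · refine ⟨b, Finset.mem_insert_self _ _, fun a ha => ?_⟩
        rcases Finset.mem_insert.1 ha with rfl | ha
        · exact sle_refl a
        · exact sle_trans (hm a ha) h
    · refine ⟨b, Finset.mem_insert_self _ _, fun a ha => ?_⟩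
      rcases Finset.mem_insert.1 ha with rfl | ha
      · exact sle_refl a
      · exact absurd ⟨a, ha⟩ hFe

lemma chain_irred {S : Set X} (hS : IsClosed S) (hne : S.Nonempty) : IsIrreducible S := by
  refine ⟨hne, fun u v hu hv hSu hSv => ?_⟩
  obtain ⟨a, haS, hau⟩ := hSu
  obtain ⟨b, hbS, hbv⟩ := hSv
  rcases htot a b with h | h
  · exact ⟨a, haS, hau, open_down hv h hbv⟩
  · exact ⟨b, hbS, open_down hu h hau, hbv⟩

lemma exists_min [QuasiSober X] {S : Set X} (hS : IsClosed S) (hne : S.Nonempty) :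
    ∃ g ∈ S, ∀ x ∈ S, specLE t g x := by
  obtain ⟨g, hg⟩ := QuasiSober.sober (chain_irred htot hS hne) hS
  refine ⟨g, ?_, fun x hx => ?_⟩
  · rw [← hg]; exact subset_closure rfl
  · rw [IsGenericPoint] at hg
    rw [specLE, hg]; exact hx

lemma sup_exists [CompactSpace X] [QuasiSober X] {Z : Set X} (hne : Z.Nonempty) :
    ∃ b, IsSupSpec t Z b := by
  have : Nonempty Z := hne.to_subtype
  have hBne : (⋂ z : Z, closure {(z : X)}).Nonempty := by
    apply IsCompact.nonempty_iInter_of_directed_nonempty_isCompact_isClosed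
    · intro a b
      rcases htot (a : X) (b : X) with h | h
      · exact ⟨b, sle_closure_subset h, subset_rfl⟩
      · exact ⟨a, subset_rfl, sle_closure_subset h⟩
    · exact fun z => ⟨z, subset_closure rfl⟩
    · exact fun z => isClosed_closure.isCompact
    · exact fun z => isClosed_closure
  obtain ⟨g, hgB, hgmin⟩ := exists_min htot (isClosed_iInter fun z : Z => isClosed_closure) hBne
  exact ⟨g, fun z hz => mem_iInter.1 hgB ⟨z, hz⟩,
    fun c hc => hgmin c (mem_iInter.2 fun z => hc z z.2)⟩

lemma inf_exists [CompactSpace X] [QuasiSober X] {Z : Set X} (hne : Z.Nonempty) :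
    ∃ b, IsInfSpec t Z b := by
  have hXne : Nonempty X := ⟨hne.some⟩
  obtain ⟨g0, _, hg0⟩ := exists_min htot (S := (univ : Set X)) isClosed_univ univ_nonempty
  obtain ⟨i, hiub, hilub⟩ := sup_exists htot (Z := {c | ∀ z ∈ Z, specLE t c z})
    ⟨g0, fun z _ => hg0 z (mem_univ z)⟩
  exact ⟨i, fun z hz => hilub z (fun c hc => hc z hz), fun c hc => hiub c hc⟩

lemma sup_mem_qcopen {V : Set X} (hVc : IsCompact V) (hVo : IsOpen V) {Z : Set X}
    (hZV : Z ⊆ V) (hne : Z.Nonempty) {x : X} (hx : IsSupSpec t Z x) : x ∈ V := by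
  classical
  by_contra hxV
  have hcover : V ⊆ ⋃ z : Z, (closure {(z : X)})ᶜ := by
    intro v hv
    rw [mem_iUnion]
    by_contra hc
    push_neg at hc
    simp only [mem_compl_iff, not_not] at hc
    exact hxV (open_down hVo (hx.2 v (fun z hz => hc ⟨z, hz⟩)) hv)
  obtain ⟨F, hF⟩ := hVc.elim_finite_subcover _
    (fun z : Z => (isClosed_closure (s := {(z : X)})).isOpen_compl) hcover
  have hFne : (F.image (Subtype.val : Z → X)).Nonempty := by
    obtain ⟨z0, hz0⟩ := hne
    have h0 := hF (hZV hz0)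
    rw [mem_iUnion₂] at h0
    obtain ⟨i, hiF, _⟩ := h0
    exact ⟨i, Finset.mem_image_of_mem _ hiF⟩
  obtain ⟨m, hmF, hm⟩ := finset_max htot _ hFne
  obtain ⟨⟨mz, hmz⟩, hmzF, rfl⟩ := Finset.mem_image.1 hmF
  have h1 := hF (hZV hmz)
  rw [mem_iUnion₂] at h1
  obtain ⟨i, hiF, hi⟩ := h1
  exact hi (hm i.1 (Finset.mem_image_of_mem _ hiF))

lemma inf_mem_closed [QuasiSober X] {C : Set X} (hC : IsClosed C) {Z : Set X}
    (hZC : Z ⊆ C) (hne : Z.Nonempty) {x : X} (hx : IsInfSpec t Z x) : x ∈ C := by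
  obtain ⟨g, hgC, hg⟩ := exists_min htot hC (hne.mono hZC)
  have hgx : specLE t g x := hx.2 g (fun z hz => hg z (hZC hz))
  exact hC.closure_subset (closure_mono (Set.singleton_subset_iff.2 hgC) hgx)

end Aux

theorem stmt2 {X : Type*} [t : TopologicalSpace X] (hX : IsSpectral X t)
    (htot : ∀ x y : X, specLE t x y ∨ specLE t y x)
    (Y : Set X) (hY : Y.Nonempty) :
    patchClosure t Y =
      {x | ∃ Z : Set X, Z ⊆ Y ∧ Z.Nonempty ∧ IsSupSpec t Z x} ∪
        {x | ∃ Z : Set X, Z ⊆ Y ∧ Z.Nonempty ∧ IsInfSpec t Z x} ∧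
    (@IsClosed X (patchOf t) Y ↔
      ∀ Z : Set X, Z ⊆ Y → Z.Nonempty →
        (∃ b ∈ Y, IsSupSpec t Z b) ∧ (∃ b ∈ Y, IsInfSpec t Z b)) := by
  classical
  obtain ⟨hcomp, hT0, hsober, B, hB1, hB2, hB3⟩ := hX
  haveI := hcomp; haveI := hT0; haveI := hsober
  set S : Set (Set X) :=
    {s : Set X | (IsCompact s ∧ IsOpen s) ∨ (IsCompact sᶜ ∧ IsOpen sᶜ)} with hSdef
  have hbasis : @IsTopologicalBasis X (patchOf t)
      ((fun f => ⋂₀ f) '' { f : Set (Set X) | f.Finite ∧ f ⊆ S }) :=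
    @isTopologicalBasis_of_subbasis X (patchOf t) S rfl
  -- sups of subsets of Y lie in the patch closure
  have hsup_mem : ∀ x : X, (∃ Z, Z ⊆ Y ∧ Z.Nonempty ∧ IsSupSpec t Z x) →
      x ∈ patchClosure t Y := by
    rintro x ⟨Z, hZY, hZne, hx⟩
    rw [patchClosure, @IsTopologicalBasis.mem_closure_iff X (patchOf t) _ hbasis Y x]
    rintro o ⟨f, ⟨hffin, hfS⟩, rfl⟩ hxo
    have hxf : ∀ s ∈ f, x ∈ s := fun s hs => hxo s hs
    set V : Set X := ⋃ s ∈ {s ∈ f | ¬(IsCompact s ∧ IsOpen s)}, sᶜ with hVdef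
    have hVqc : ∀ s ∈ {s ∈ f | ¬(IsCompact s ∧ IsOpen s)}, IsCompact sᶜ ∧ IsOpen sᶜ :=
      fun s hs => (hfS hs.1).resolve_left hs.2
    have hVc : IsCompact V :=
      (hffin.subset (sep_subset _ _)).isCompact_biUnion fun s hs => (hVqc s hs).1
    have hVo : IsOpen V := isOpen_biUnion fun s hs => (hVqc s hs).2
    have hxV : x ∉ V := by
      intro hxV
      obtain ⟨s, hs, hxs⟩ := mem_iUnion₂.1 hxV
      exact hxs (hxf s hs.1)
    have hZnV : ¬ (Z ⊆ V) := fun h => hxV (sup_mem_qcopen htot hVc hVo h hZne hx)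
    obtain ⟨z, hzZ, hzV⟩ := not_subset.1 hZnV
    refine ⟨z, ?_, hZY hzZ⟩
    intro s hsf
    by_cases hqc : IsCompact s ∧ IsOpen s
    · exact open_down hqc.2 (hx.1 z hzZ) (hxf s hsf)
    · by_contra hzs
      exact hzV (mem_iUnion₂.2 ⟨s, ⟨hsf, hqc⟩, hzs⟩)
  -- infs of subsets of Y lie in the patch closure
  have hinf_mem : ∀ x : X, (∃ Z, Z ⊆ Y ∧ Z.Nonempty ∧ IsInfSpec t Z x) →
      x ∈ patchClosure t Y := by
    rintro x ⟨Z, hZY, hZne, hx⟩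
    rw [patchClosure, @IsTopologicalBasis.mem_closure_iff X (patchOf t) _ hbasis Y x]
    rintro o ⟨f, ⟨hffin, hfS⟩, rfl⟩ hxo
    have hxf : ∀ s ∈ f, x ∈ s := fun s hs => hxo s hs
    set U : Set X := ⋂ s ∈ {s ∈ f | IsCompact s ∧ IsOpen s}, s with hUdef
    have hU := qc_biInter hB1 hB2 hB3 (hffin.subset (sep_subset _ _))
      (fun s hs => hs.2)
    have hxU : x ∈ U := mem_iInter₂.2 fun s hs => hxf s hs.1
    have hZU : ¬ (Z ∩ U = ∅) := by
      intro h
      have hZUc : Z ⊆ Uᶜ := fun z hz => fun hzU => (eq_empty_iff_forall_notMem.1 h z) ⟨hz, hzU⟩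
      exact (inf_mem_closed htot hU.2.isClosed_compl hZUc hZne hx) hxU
    obtain ⟨z, hzZ, hzU⟩ := nonempty_iff_ne_empty.2 hZU
    refine ⟨z, ?_, hZY hzZ⟩
    intro s hsf
    by_cases hqc : IsCompact s ∧ IsOpen s
    · exact mem_iInter₂.1 hzU s ⟨hsf, hqc⟩
    · have hsc : IsCompact sᶜ ∧ IsOpen sᶜ := (hfS hsf).resolve_left hqc
      by_contra hzs
      exact (open_down hsc.2 (hx.1 z hzZ) hzs) (hxf s hsf)
  -- the closure formula
  have hmain : patchClosure t Y =
      {x | ∃ Z : Set X, Z ⊆ Y ∧ Z.Nonempty ∧ IsSupSpec t Z x} ∪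
        {x | ∃ Z : Set X, Z ⊆ Y ∧ Z.Nonempty ∧ IsInfSpec t Z x} := by
    apply subset_antisymm
    · intro x hx
      by_contra hxR
      rw [mem_union] at hxR
      push_neg at hxR
      obtain ⟨hx1, hx2⟩ := hxR
      simp only [mem_setOf_eq, not_exists] at hx1 hx2
      -- build W containing Z₁ but not x
      have hW : ∃ W : Set X, IsCompact W ∧ IsOpen W ∧
          (∀ y ∈ Y, specLE t y x → y ∈ W) ∧ x ∉ W := by
        rcases ({y ∈ Y | specLE t y x} : Set X).eq_empty_or_nonempty with he | hne
        · exact ⟨∅, isCompact_empty, isOpen_empty,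
            fun y hy hyx => absurd (show y ∈ {y ∈ Y | specLE t y x} from ⟨hy, hyx⟩)
              (by rw [he]; exact fun h => h), fun h => h⟩
        · obtain ⟨s, hs⟩ := sup_exists htot hne
          have hsx : specLE t s x := hs.2 x (fun z hz => hz.2)
          have hxs : x ≠ s := by
            rintro rfl
            exact hx1 {y ∈ Y | specLE t y x} ⟨fun y hy => hy.1, hne, hs⟩
          obtain ⟨W, hWc, hWo, hsW, hxW⟩ := sep hB1 hB3 hsx hxs
          exact ⟨W, hWc, hWo, fun y hy hyx => open_down hWo (hs.1 y ⟨hy, hyx⟩) hsW, hxW⟩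
      -- build U containing x but no point of Z₂
      have hU : ∃ U : Set X, IsCompact U ∧ IsOpen U ∧ x ∈ U ∧
          (∀ y ∈ Y, specLE t x y → y ∉ U) := by
        rcases ({y ∈ Y | specLE t x y} : Set X).eq_empty_or_nonempty with he | hne
        · exact ⟨univ, isCompact_univ, isOpen_univ, mem_univ x,
            fun y hy hxy _ => absurd (show y ∈ {y ∈ Y | specLE t x y} from ⟨hy, hxy⟩)
              (by rw [he]; exact fun h => h)⟩
        · obtain ⟨i, hi⟩ := inf_exists htot hne
          have hxi : specLE t x i := hi.2 x (fun z hz => hz.2)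
          have hxine : i ≠ x := by
            rintro rfl
            exact hx2 {y ∈ Y | specLE t i y} ⟨fun y hy => hy.1, hne, hi⟩
          obtain ⟨U, hUc, hUo, hxU, hiU⟩ := sep hB1 hB3 hxi hxine
          exact ⟨U, hUc, hUo, hxU, fun y hy hxy hyU => hiU (open_down hUo (hi.1 y ⟨hy, hxy⟩) hyU)⟩
      obtain ⟨W, hWc, hWo, hWmem, hxW⟩ := hW
      obtain ⟨U, hUc, hUo, hxU, hUmem⟩ := hU
      have hUS : U ∈ S := Or.inl ⟨hUc, hUo⟩
      have hWS : Wᶜ ∈ S := Or.inr (by rw [compl_compl]; exact ⟨hWc, hWo⟩)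
      have hOopen : @IsOpen X (patchOf t) (U ∩ Wᶜ) :=
        @IsOpen.inter X (patchOf t) U Wᶜ
          (TopologicalSpace.isOpen_generateFrom_of_mem hUS)
          (TopologicalSpace.isOpen_generateFrom_of_mem hWS)
      have hYsub : Y ⊆ (U ∩ Wᶜ)ᶜ := by
        intro y hy hyO
        rcases htot y x with h | h
        · exact hyO.2 (hWmem y hy h)
        · exact hUmem y hy h hyO.1
      have hcl : patchClosure t Y ⊆ (U ∩ Wᶜ)ᶜ :=
        @closure_minimal X (patchOf t) Y ((U ∩ Wᶜ)ᶜ) hYsub (@IsOpen.isClosed_compl X (patchOf t) (U ∩ Wᶜ) hOopen)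
      exact (hcl hx) ⟨hxU, hxW⟩
    · intro x hx
      rcases hx with hx | hx
      · exact hsup_mem x hx
      · exact hinf_mem x hx
  refine ⟨hmain, ?_, ?_⟩
  · intro hcl Z hZY hZne
    have hYeq : patchClosure t Y = Y := @IsClosed.closure_eq X (patchOf t) Y hcl
    obtain ⟨b, hb⟩ := sup_exists htot hZne
    obtain ⟨c, hc⟩ := inf_exists htot hZne
    constructor
    · refine ⟨b, ?_, hb⟩
      rw [← hYeq]
      exact hsup_mem b ⟨Z, hZY, hZne, hb⟩
    · refine ⟨c, ?_, hc⟩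
      rw [← hYeq]
      exact hinf_mem c ⟨Z, hZY, hZne, hc⟩
  · intro h
    have hcs : @closure X (patchOf t) Y ⊆ Y := by
      intro x hx
      rw [show @closure X (patchOf t) Y = patchClosure t Y from rfl, hmain] at hx
      rcases hx with ⟨Z, hZY, hZne, hx⟩ | ⟨Z, hZY, hZne, hx⟩
      · obtain ⟨b, hbY, hb⟩ := (h Z hZY hZne).1
        have : x = b := sle_antisymm (hx.2 b hb.1) (hb.2 x hx.1)
        exact this ▸ hbY
      · obtain ⟨b, hbY, hb⟩ := (h Z hZY hZne).2
        have : x = b := sle_antisymm (hb.2 x hx.1) (hx.2 b hb.1)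
        exact this ▸ hbY
    have hceq : @closure X (patchOf t) Y = Y :=
      subset_antisymm hcs (@subset_closure X (patchOf t) Y)
    exact hceq ▸ @isClosed_closure X (patchOf t) Y
end

section
/- Let X be a spectral space. If U is an open subset of X possessing a maximum element u₀ with respect to the specialization order, then U is quasi-compact and U equals the set of generizations of u₀, i.e., U = {x ∈ X : x ≤ u₀}. -/
open Set TopologicalSpace

theorem stmt3 {X : Type*} [t : TopologicalSpace X] (hX : IsSpectral X t)
    (U : Set X) (hU : IsOpen U) (u₀ : X) (hu₀ : u₀ ∈ U)
    (hmax : ∀ x ∈ U, specLE t x u₀) :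
    IsCompact U ∧ U = {x | specLE t x u₀} := by
  have key : ∀ x, specLE t x u₀ → ∀ V : Set X, IsOpen V → u₀ ∈ V → x ∈ V := by
    intro x hx V hV hu
    obtain ⟨y, hyV, hy⟩ := mem_closure_iff.mp hx V hV hu
    rw [Set.mem_singleton_iff] at hy
    rwa [hy] at hyV
  constructor
  · rw [isCompact_iff_finite_subcover]
    intro ι V hV hcover
    obtain ⟨i, hi⟩ := Set.mem_iUnion.mp (hcover hu₀)
    refine ⟨{i}, fun x hx => ?_⟩
    simp only [Finset.mem_singleton, Set.iUnion_iUnion_eq_left]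
    exact key x (hmax x hx) (V i) (hV i) hi
  · ext x
    exact ⟨fun hx => hmax x hx, fun hx => key x hx U hU hu₀⟩
end

section
/- Let X be a spectral space that is locally with maximum. Then every quasi-compact open subset of X has finitely many maximal elements with respect to the specialization order. -/
open Set TopologicalSpace

/-- A space is locally with maximum if every point has a neighborhood basis of open sets each
of which has a maximum with respect to the specialization order. -/
def LocallyWithMaximum (X : Type*) (t : TopologicalSpace X) : Prop :=
  ∀ x : X, ∀ V : Set X, @IsOpen X t V → x ∈ V →
    ∃ U : Set X, @IsOpen X t U ∧ x ∈ U ∧ U ⊆ V ∧ ∃ u₀ ∈ U, ∀ y ∈ U, specLE t y u₀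

theorem stmt4 {X : Type*} [t : TopologicalSpace X] (hX : IsSpectral X t)
    (hloc : LocallyWithMaximum X t)
    (U : Set X) (hU : IsOpen U) (hc : IsCompact U) :
    {m | m ∈ U ∧ ∀ y ∈ U, specLE t m y → y = m}.Finite := by
  classical
  choose W hWopen hWmem hWsub u₀ hu₀mem hu₀max using fun x : U => hloc x U hU x.2
  obtain ⟨s, hs⟩ := hc.elim_finite_subcover (fun x : U => W x) hWopen
    (fun x hx => mem_iUnion.2 ⟨⟨x, hx⟩, hWmem ⟨x, hx⟩⟩)
  apply Set.Finite.subset (s.finite_toSet.image u₀)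
  rintro m ⟨hmU, hmax⟩
  have : m ∈ ⋃ i ∈ s, W i := hs hmU
  simp only [mem_iUnion] at this
  obtain ⟨i, hi, him⟩ := this
  exact ⟨i, hi, hmax _ (hWsub i (hu₀mem i)) (hu₀max i m him)⟩
end

section
/- Let L be an algebraic lattice of sets in a set S, viewed as a spectral space under the Zariski topology (the topology whose basic quasi-compact open sets are the finite unions of up-sets of finitely generated elements). Then the set L_fin of finitely generated elements of L is dense in L with respect to the constructible topology. -/
open Set TopologicalSpace

/-- An algebraic lattice of sets in `S`. -/
def IsAlgebraicLattice {S : Type*} (L : Set (Set S)) : Prop :=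
  (∀ D : Set (Set S), D ⊆ L → ⋂₀ D ∈ L) ∧
  (∀ D : Set (Set S), D ⊆ L → D.Nonempty → DirectedOn (· ⊆ ·) D → ⋃₀ D ∈ L)

/-- The Zariski topology on an algebraic lattice of sets: subbasic open sets are the up-sets
of finitely generated elements, i.e. the sets `{A ∈ L | F ⊆ A}` for finite `F ⊆ S`. -/
def zarTopL {S : Type*} (L : Set (Set S)) : TopologicalSpace ↥L :=
  TopologicalSpace.generateFrom
    {U : Set ↥L | ∃ F : Set S, F.Finite ∧ U = {A : ↥L | F ⊆ (A : Set S)}}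

/-- `A` is a finitely generated element of `L`: the closure of a finite subset of `S`,
where the closure associated to `L` is intersection of all members of `L` containing it. -/
def FinGenL {S : Type*} (L : Set (Set S)) (A : Set S) : Prop :=
  ∃ F : Set S, F.Finite ∧ A = ⋂₀ {I ∈ L | F ⊆ I}

lemma zar_upclosed {S : Type*} (L : Set (Set S)) {U : Set ↥L}
    (hU : TopologicalSpace.GenerateOpen
      {U : Set ↥L | ∃ F : Set S, F.Finite ∧ U = {A : ↥L | F ⊆ (A : Set S)}} U) :
    ∀ {A B : ↥L}, (A : Set S) ⊆ (B : Set S) → A ∈ U → B ∈ U := by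
  induction hU with
  | basic s hs =>
    rintro A B hAB hA
    obtain ⟨F, hF, rfl⟩ := hs
    exact hA.trans hAB
  | univ => intros; trivial
  | inter s t _ _ ihs iht => rintro A B hAB ⟨h1, h2⟩; exact ⟨ihs hAB h1, iht hAB h2⟩
  | sUnion K _ ih => rintro A B hAB ⟨s, hs, hA⟩; exact ⟨s, hs, ih s hs hAB hA⟩

lemma zar_upclosed' {S : Type*} (L : Set (Set S)) {U : Set ↥L}
    (hU : @IsOpen ↥L (zarTopL L) U) :
    ∀ {A B : ↥L}, (A : Set S) ⊆ (B : Set S) → A ∈ U → B ∈ U :=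
  zar_upclosed L hU

lemma exists_fingen {S : Type*} (L : Set (Set S)) (hL : IsAlgebraicLattice L)
    {O : Set ↥L} (hO : @IsOpen ↥L (zarTopL L) O) {A : ↥L} (hA : A ∈ O) :
    ∃ B : ↥L, FinGenL L (B : Set S) ∧ (B : Set S) ⊆ (A : Set S) ∧ B ∈ O := by
  letI := zarTopL L
  have hbasis := TopologicalSpace.isTopologicalBasis_of_subbasis
    (s := {U : Set ↥L | ∃ F : Set S, F.Finite ∧ U = {A : ↥L | F ⊆ (A : Set S)}}) rfl
  obtain ⟨t, ⟨f, ⟨hffin, hfsub⟩, rfl⟩, hAt, htO⟩ :=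
    hbasis.exists_subset_of_mem_open hA hO
  haveI : Finite ↥f := hffin.to_subtype
  choose g hgfin hgeq using fun s : f => hfsub s.2
  set F : Set S := ⋃ s : f, g s with hF
  have hFfin : F.Finite := Set.finite_iUnion hgfin
  have hFA : F ⊆ (A : Set S) := by
    refine Set.iUnion_subset fun s => ?_
    have := hAt
    rw [Set.mem_sInter] at this
    have hs := this s s.2
    rw [hgeq s] at hs
    exact hs
  have hBL : ⋂₀ {I ∈ L | F ⊆ I} ∈ L := hL.1 _ (fun I hI => hI.1)
  refine ⟨⟨_, hBL⟩, ⟨F, hFfin, rfl⟩, ?_, ?_⟩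
  · exact Set.sInter_subset_of_mem ⟨A.2, hFA⟩
  · refine htO ?_
    rw [Set.mem_sInter]
    intro s hs
    rw [show s = {A : ↥L | g ⟨s, hs⟩ ⊆ (A : Set S)} from hgeq ⟨s, hs⟩]
    intro x hx
    exact fun I hI => hI.2 (Set.mem_iUnion.2 ⟨⟨s, hs⟩, hx⟩)


theorem stmt8 {S : Type*} (L : Set (Set S)) (hL : IsAlgebraicLattice L) :
    @Dense ↥L (patchOf (zarTopL L)) {A : ↥L | FinGenL L (A : Set S)} := by
  letI tp : TopologicalSpace ↥L := patchOf (zarTopL L)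
  rw [dense_iff_inter_open]
  intro U hU ⟨A, hA⟩
  have hbasis := TopologicalSpace.isTopologicalBasis_of_subbasis
    (t := tp)
    (s := {s : Set ↥L | (@IsCompact ↥L (zarTopL L) s ∧ @IsOpen ↥L (zarTopL L) s) ∨
      (@IsCompact ↥L (zarTopL L) sᶜ ∧ @IsOpen ↥L (zarTopL L) sᶜ)}) rfl
  obtain ⟨t, ⟨f, ⟨hffin, hfsub⟩, rfl⟩, hAt, htU⟩ :=
    hbasis.exists_subset_of_mem_open hA hU
  set Of : Set (Set ↥L) := {s ∈ f | @IsOpen ↥L (zarTopL L) s} with hOf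
  have hOopen : @IsOpen ↥L (zarTopL L) (⋂₀ Of) :=
    @Set.Finite.isOpen_sInter ↥L (zarTopL L) Of
      (hffin.subset (fun s hs => hs.1)) (fun s hs => hs.2)
  have hAO : A ∈ ⋂₀ Of := fun s hs => hAt s hs.1
  obtain ⟨B, hBfg, hBA, hBO⟩ := exists_fingen L hL hOopen hAO
  refine ⟨B, htU ?_, hBfg⟩
  intro s hs
  rcases hfsub hs with h | h
  · exact hBO s ⟨hs, h.2⟩
  · by_contra hBs
    exact zar_upclosed' L h.2 hBA hBs (hAt s hs)
end

section
/- Let L be an algebraic lattice of sets in S, a spectral space under the Zariski topology. The set L_fin of finitely generated elements of L is a spectral space in the subspace (Zariski) topology if and only if L_fin = L. -/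
open Set TopologicalSpace

namespace Stmt9Aux

variable {S : Type*} (L : Set (Set S))
abbrev Xf := ↥{A : ↥L | FinGenL L (A : Set S)}
def τ : TopologicalSpace (Xf L) := TopologicalSpace.induced Subtype.val (zarTopL L)
def W (F : Set S) : Set (Xf L) := {A | F ⊆ ((A : ↥L) : Set S)}
def BX : Set (Set (Xf L)) := {U | ∃ F : Set S, F.Finite ∧ U = W L F}
lemma W_inter (F G : Set S) : W L F ∩ W L G = W L (F ∪ G) := by
  ext A; simp [W, union_subset_iff, and_comm]
lemma W_empty : W L ∅ = univ := by ext A; simp [W]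
lemma basisX : @IsTopologicalBasis (Xf L) (τ L) (BX L) := by
  refine @IsTopologicalBasis.mk _ (τ L) _ ?_ ?_ ?_
  · rintro _ ⟨F, hF, rfl⟩ _ ⟨G, hG, rfl⟩ x hx
    exact ⟨W L (F ∪ G), ⟨F ∪ G, hF.union hG, rfl⟩, (W_inter L F G) ▸ hx, (W_inter L F G).ge⟩
  · exact eq_univ_of_univ_subset ((W_empty L) ▸ subset_sUnion_of_mem ⟨∅, finite_empty, rfl⟩)
  · show τ L = _
    rw [τ, zarTopL, induced_generateFrom_eq]
    congr 1
    ext u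
    constructor
    · rintro ⟨v, ⟨F, hF, rfl⟩, rfl⟩; exact ⟨F, hF, rfl⟩
    · rintro ⟨F, hF, rfl⟩
      exact ⟨{A : ↥L | F ⊆ (A : Set S)}, ⟨F, hF, rfl⟩, rfl⟩


def cl (F : Set S) : Set S := ⋂₀ {I ∈ L | F ⊆ I}

lemma subset_cl {F : Set S} : F ⊆ cl L F := fun _ ha _ hI => hI.2 ha

lemma cl_mem (hL : IsAlgebraicLattice L) (F : Set S) : cl L F ∈ L :=
  hL.1 _ (fun _ hI => hI.1)

lemma cl_subset {F A : Set S} (hA : A ∈ L) (h : F ⊆ A) : cl L F ⊆ A :=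
  sInter_subset_of_mem ⟨hA, h⟩

lemma cl_mono {F G : Set S} (h : F ⊆ G) : cl L F ⊆ cl L G :=
  fun _ ha _ hI => ha _ ⟨hI.1, h.trans hI.2⟩

lemma finGen_cl {F : Set S} (hF : F.Finite) : FinGenL L (cl L F) := ⟨F, hF, rfl⟩

/-- the canonical finitely generated point `cl F` as an element of the subspace -/
def pt (hL : IsAlgebraicLattice L) {F : Set S} (hF : F.Finite) : Xf L :=
  ⟨⟨cl L F, cl_mem L hL F⟩, finGen_cl L hF⟩

lemma pt_mem_W (hL : IsAlgebraicLattice L) {F G : Set S} (hF : F.Finite) :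
    pt L hL hF ∈ W L G ↔ G ⊆ cl L F := Iff.rfl

lemma mem_W {F : Set S} {A : Xf L} : A ∈ W L F ↔ F ⊆ ((A : ↥L) : Set S) := Iff.rfl

lemma W_mono {F G : Set S} (h : F ⊆ G) : W L G ⊆ W L F :=
  fun _ hA => h.trans hA

lemma cl_subset_of_mem_W {F : Set S} {A : Xf L} (hA : A ∈ W L F) :
    cl L F ⊆ ((A : ↥L) : Set S) := cl_subset L (A : ↥L).2 hA

lemma W_compact (hL : IsAlgebraicLattice L) {F : Set S} (hF : F.Finite) :
    @IsCompact (Xf L) (τ L) (W L F) := by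
  letI := τ L
  refine isCompact_of_finite_subcover fun {ι} U hU hcov => ?_
  have hmem : pt L hL hF ∈ W L F := subset_cl L
  obtain ⟨i, hi⟩ := mem_iUnion.mp (hcov hmem)
  obtain ⟨_, ⟨G, hG, rfl⟩, hxG, hGU⟩ :=
    (basisX L).exists_subset_of_mem_open hi (hU i)
  refine ⟨{i}, fun A hA => mem_iUnion₂.mpr ⟨i, Finset.mem_singleton_self i, hGU ?_⟩⟩
  exact mem_W L |>.mpr ((pt_mem_W L hL hF |>.mp hxG).trans (cl_subset_of_mem_W L hA))

lemma closure_single (g : Xf L) :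
    @closure (Xf L) (τ L) {g} = {B : Xf L | ((B : ↥L) : Set S) ⊆ ((g : ↥L) : Set S)} := by
  letI := τ L
  ext B
  rw [(basisX L).mem_closure_iff]
  constructor
  · intro h a haB
    obtain ⟨x, hx, hxg⟩ := h (W L {a}) ⟨{a}, finite_singleton a, rfl⟩
      (singleton_subset_iff.mpr haB)
    rw [mem_singleton_iff] at hxg
    exact singleton_subset_iff.mp (hxg ▸ hx)
  · rintro h _ ⟨F, hF, rfl⟩ hB
    exact ⟨g, (hB.trans h : F ⊆ _), rfl⟩

lemma W_open {F : Set S} (hF : F.Finite) : @IsOpen (Xf L) (τ L) (W L F) :=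
  letI := τ L
  (basisX L).isOpen ⟨F, hF, rfl⟩

lemma finite_subset_sUnion_directed {D : Set (Set S)} (hne : D.Nonempty)
    (hdir : DirectedOn (· ⊆ ·) D) {F : Set S} (hF : F.Finite) (hsub : F ⊆ ⋃₀ D) :
    ∃ d ∈ D, F ⊆ d := by
  refine Set.Finite.induction_on (motive := fun F _ => F ⊆ ⋃₀ D → ∃ d ∈ D, F ⊆ d) F hF
    (fun _ => ⟨hne.choose, hne.choose_spec, empty_subset _⟩) ?_ hsub
  rintro a F haF hFfin ih hsub'
  obtain ⟨d1, hd1, hFd1⟩ := ih (fun x hx => hsub' (Or.inr hx))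
  obtain ⟨d2, hd2, had2⟩ := hsub' (mem_insert a F)
  obtain ⟨d3, hd3, h13, h23⟩ := hdir d1 hd1 d2 hd2
  exact ⟨d3, hd3, insert_subset (h23 had2) (hFd1.trans h13)⟩

lemma t0 : @T0Space (Xf L) (τ L) := by
  letI := τ L
  refine (t0Space_iff_inseparable (Xf L)).mpr fun x y h => ?_
  have key : ∀ (x y : Xf L), Inseparable x y → ((x : ↥L) : Set S) ⊆ ((y : ↥L) : Set S) := by
    intro x y h a ha
    exact singleton_subset_iff.mp ((h.mem_open_iff (W_open L (finite_singleton a))).mp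
      (singleton_subset_iff.mpr ha))
  exact Subtype.ext (Subtype.ext (subset_antisymm (key x y h) (key y x h.symm)))

lemma quasiSober_of_all (hL : IsAlgebraicLattice L)
    (hall : ∀ A : ↥L, FinGenL L (A : Set S)) : @QuasiSober (Xf L) (τ L) := by
  letI := τ L
  constructor
  intro Z hirr hcl
  set D : Set (Set S) := {C | ∃ F : Set S, F.Finite ∧ (Z ∩ W L F).Nonempty ∧ C = cl L F} with hD
  have hDL : D ⊆ L := by rintro _ ⟨F, hF, _, rfl⟩; exact cl_mem L hL F
  have hDne : D.Nonempty := ⟨cl L ∅, ∅, finite_empty, by rw [W_empty, inter_univ]; exact hirr.1, rfl⟩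
  have hdir : DirectedOn (· ⊆ ·) D := by
    rintro _ ⟨F, hF, hFZ, rfl⟩ _ ⟨G, hG, hGZ, rfl⟩
    have hne : (Z ∩ W L (F ∪ G)).Nonempty := by
      rw [← W_inter]
      exact hirr.2 (W L F) (W L G) (W_open L hF) (W_open L hG) hFZ hGZ
    exact ⟨cl L (F ∪ G), ⟨F ∪ G, hF.union hG, hne, rfl⟩,
      cl_mono L subset_union_left, cl_mono L subset_union_right⟩
  have hgL : ⋃₀ D ∈ L := hL.2 D hDL hDne hdir
  refine ⟨⟨⟨⋃₀ D, hgL⟩, hall ⟨⋃₀ D, hgL⟩⟩, ?_⟩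
  show closure _ = Z
  rw [closure_single]
  ext B
  simp only [mem_setOf_eq]
  constructor
  · intro hB
    by_contra hBZ
    obtain ⟨_, ⟨F, hF, rfl⟩, hBF, hFc⟩ :=
      (basisX L).exists_subset_of_mem_open (show B ∈ Zᶜ from hBZ) hcl.isOpen_compl
    obtain ⟨_, ⟨G, hG, ⟨A, hAZ, hAG⟩, rfl⟩, hFd⟩ :=
      finite_subset_sUnion_directed hDne hdir hF (hBF.trans hB)
    exact hFc ((mem_W L).mpr (hFd.trans (cl_subset_of_mem_W L hAG))) hAZ
  · intro hBZ a haB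
    exact mem_sUnion.mpr ⟨cl L {a}, ⟨{a}, finite_singleton a, ⟨B, hBZ, singleton_subset_iff.mpr haB⟩, rfl⟩,
      subset_cl L (mem_singleton a)⟩

lemma downset_closed (A : Set S) :
    @IsClosed (Xf L) (τ L) {B : Xf L | ((B : ↥L) : Set S) ⊆ A} := by
  letI := τ L
  have hEq : {B : Xf L | ((B : ↥L) : Set S) ⊆ A} =
      ⋂ F ∈ {F : Set S | F.Finite ∧ ¬F ⊆ A}, (W L F)ᶜ := by
    ext B
    simp only [mem_setOf_eq, mem_iInter, mem_compl_iff]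
    constructor
    · intro hB F hF hFB
      exact hF.2 ((mem_W L).mp hFB |>.trans hB)
    · intro h a haB
      by_contra haA
      exact h {a} ⟨finite_singleton a, fun hs => haA (hs rfl)⟩
        ((mem_W L).mpr (singleton_subset_iff.mpr haB))
  rw [hEq]
  exact isClosed_biInter fun F hF => (W_open L hF.1).isClosed_compl

lemma downset_irred (hL : IsAlgebraicLattice L) {A : Set S} (hA : A ∈ L) :
    @IsIrreducible (Xf L) (τ L) {B : Xf L | ((B : ↥L) : Set S) ⊆ A} := by
  letI := τ L
  constructor
  · exact ⟨pt L hL finite_empty, cl_subset L hA (empty_subset A)⟩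
  · rintro u v hu hv ⟨B1, hB1, hB1u⟩ ⟨B2, hB2, hB2v⟩
    obtain ⟨_, ⟨F, hF, rfl⟩, hBF, hFu⟩ := (basisX L).exists_subset_of_mem_open hB1u hu
    obtain ⟨_, ⟨G, hG, rfl⟩, hBG, hGv⟩ := (basisX L).exists_subset_of_mem_open hB2v hv
    refine ⟨pt L hL (hF.union hG),
      cl_subset L hA (union_subset (hBF.trans hB1) (hBG.trans hB2)), hFu ?_, hGv ?_⟩
    · exact subset_union_left.trans (subset_cl L)
    · exact subset_union_right.trans (subset_cl L)


end Stmt9Aux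

open Stmt9Aux in
theorem stmt9 {S : Type*} (L : Set (Set S)) (hL : IsAlgebraicLattice L) :
    IsSpectral (↥{A : ↥L | FinGenL L (A : Set S)})
        (TopologicalSpace.induced Subtype.val (zarTopL L)) ↔
      {A : ↥L | FinGenL L (A : Set S)} = Set.univ := by
  constructor
  · intro hspec
    refine Set.eq_univ_of_forall fun A => ?_
    obtain ⟨g, hg⟩ := @QuasiSober.sober _ (τ L) hspec.2.2.1 _
      (downset_irred L hL A.2) (downset_closed L (A : Set S))
    have hg' : @closure _ (τ L) {g} = {B : Xf L | ((B : ↥L) : Set S) ⊆ (A : Set S)} := hg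
    rw [closure_single] at hg'
    have hgA : ((g : ↥L) : Set S) ⊆ (A : Set S) := by
      have h1 : g ∈ {B : Xf L | ((B : ↥L) : Set S) ⊆ ((g : ↥L) : Set S)} := by show ((g : ↥L) : Set S) ⊆ ((g : ↥L) : Set S); exact Set.Subset.rfl
      rw [hg'] at h1
      exact h1
    have hAg : (A : Set S) ⊆ ((g : ↥L) : Set S) := by
      intro a ha
      have h2 : pt L hL (finite_singleton a) ∈
          {B : Xf L | ((B : ↥L) : Set S) ⊆ (A : Set S)} :=
        cl_subset L A.2 (singleton_subset_iff.mpr ha)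
      rw [← hg'] at h2
      exact h2 (subset_cl L (mem_singleton a))
    have : (A : Set S) = ((g : ↥L) : Set S) := subset_antisymm hAg hgA
    show FinGenL L (A : Set S)
    rw [this]
    exact g.2
  · intro h
    have hc : @CompactSpace (Xf L) (τ L) := by
      letI := τ L
      constructor
      rw [← W_empty L]
      exact W_compact L hL finite_empty
    exact ⟨hc, t0 L,
      quasiSober_of_all L hL (fun A => eq_univ_iff_forall.mp h A), BX L,
      (by rintro _ ⟨F, hF, rfl⟩; exact ⟨W_compact L hL hF, W_open L hF⟩),
      (by rintro _ ⟨F, hF, rfl⟩ _ ⟨G, hG, rfl⟩; exact ⟨F ∪ G, hF.union hG, W_inter L F G⟩),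
      basisX L⟩
end

section
/- Let M be a module over a commutative ring R. The set f(M) of finitely generated R-submodules of M, viewed inside the spectral space F(M) of all R-submodules of M with the Zariski topology, is dense in F(M) with respect to the constructible topology; moreover, f(M) is a spectral space (in the subspace topology) if and only if M is a Noetherian R-module. -/
open Set TopologicalSpace

/-- The Zariski topology on the set of `R`-submodules of `M`, generated by the sets
`B(x₁,…,xₙ) = {N | x₁,…,xₙ ∈ N}`. -/
def zarModTop (R M : Type*) [Semiring R] [AddCommMonoid M] [Module R M] :
    TopologicalSpace (Submodule R M) :=
  TopologicalSpace.generateFrom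
    {U : Set (Submodule R M) | ∃ F : Set M, F.Finite ∧ U = {N : Submodule R M | F ⊆ (N : Set M)}}

/-- The Zariski topology on the set of ideals of `R`. -/
def zarIdealTop (R : Type*) [CommRing R] : TopologicalSpace (Ideal R) :=
  TopologicalSpace.generateFrom
    {U : Set (Ideal R) | ∃ F : Set R, F.Finite ∧ U = {I : Ideal R | F ⊆ (I : Set R)}}

section Helpers

variable {R M : Type*} [CommRing R] [AddCommGroup M] [Module R M]

/-- Key property of Zariski-open sets: every point has a "finite reason" for membership. -/
lemma zar_key {s : Set (Submodule R M)} (hs : @IsOpen _ (zarModTop R M) s) :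
    ∀ N ∈ s, ∃ F : Set M, F.Finite ∧ F ⊆ (N : Set M) ∧
      ∀ N' : Submodule R M, F ⊆ (N' : Set M) → N' ∈ s := by
  have hs' : TopologicalSpace.GenerateOpen
      {U : Set (Submodule R M) | ∃ F : Set M, F.Finite ∧
        U = {N : Submodule R M | F ⊆ (N : Set M)}} s := hs
  clear hs
  induction hs' with
  | basic u hu =>
      obtain ⟨F, hF, rfl⟩ := hu
      exact fun N hN => ⟨F, hF, hN, fun N' h => h⟩
  | univ => exact fun N _ => ⟨∅, finite_empty, empty_subset _, fun _ _ => trivial⟩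
  | inter u v hu hv ihu ihv =>
      intro N hN
      obtain ⟨F1, h1, h1N, h1'⟩ := ihu N hN.1
      obtain ⟨F2, h2, h2N, h2'⟩ := ihv N hN.2
      exact ⟨F1 ∪ F2, h1.union h2, union_subset h1N h2N,
        fun N' h => ⟨h1' N' ((subset_union_left).trans h), h2' N' ((subset_union_right).trans h)⟩⟩
  | sUnion T hT ih =>
      intro N hN
      obtain ⟨u, hu, hNu⟩ := hN
      obtain ⟨F, hF, hFN, h'⟩ := ih u hu N hNu
      exact ⟨F, hF, hFN, fun N' h => ⟨u, hu, h' N' h⟩⟩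

/-- Zariski-open sets are upward closed. -/
lemma zar_upward {s : Set (Submodule R M)} (hs : @IsOpen _ (zarModTop R M) s)
    {N N' : Submodule R M} (hN : N ∈ s) (hle : N ≤ N') : N' ∈ s := by
  obtain ⟨F, _, hFN, h'⟩ := zar_key hs N hN
  exact h' N' (hFN.trans hle)

/-- The basic sets are open. -/
lemma zar_basic_open (F : Set M) (hF : F.Finite) :
    @IsOpen _ (zarModTop R M) {N : Submodule R M | F ⊆ (N : Set M)} :=
  TopologicalSpace.GenerateOpen.basic _ ⟨F, hF, rfl⟩

/-- Key property for patch-open sets. -/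
lemma patch_key {U : Set (Submodule R M)} (hU : @IsOpen _ (patchOf (zarModTop R M)) U) :
    ∀ N ∈ U, ∃ F : Set M, F.Finite ∧ F ⊆ (N : Set M) ∧
      ∀ N' : Submodule R M, N' ≤ N → F ⊆ (N' : Set M) → N' ∈ U := by
  have hU' : TopologicalSpace.GenerateOpen
      {s : Set (Submodule R M) | (@IsCompact _ (zarModTop R M) s ∧ @IsOpen _ (zarModTop R M) s) ∨
        (@IsCompact _ (zarModTop R M) sᶜ ∧ @IsOpen _ (zarModTop R M) sᶜ)} U := hU
  clear hU
  induction hU' with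
  | basic u hu =>
      intro N hN
      rcases hu with ⟨_, ho⟩ | ⟨_, ho⟩
      · obtain ⟨F, hF, hFN, h'⟩ := zar_key ho N hN
        exact ⟨F, hF, hFN, fun N' _ h => h' N' h⟩
      · refine ⟨∅, finite_empty, empty_subset _, fun N' hle _ => ?_⟩
        by_contra hc
        exact (zar_upward ho hc hle) hN
  | univ => exact fun N _ => ⟨∅, finite_empty, empty_subset _, fun _ _ _ => trivial⟩
  | inter u v hu hv ihu ihv =>
      intro N hN
      obtain ⟨F1, h1, h1N, h1'⟩ := ihu N hN.1
      obtain ⟨F2, h2, h2N, h2'⟩ := ihv N hN.2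
      exact ⟨F1 ∪ F2, h1.union h2, union_subset h1N h2N,
        fun N' hle h => ⟨h1' N' hle ((subset_union_left).trans h),
          h2' N' hle ((subset_union_right).trans h)⟩⟩
  | sUnion T hT ih =>
      intro N hN
      obtain ⟨u, hu, hNu⟩ := hN
      obtain ⟨F, hF, hFN, h'⟩ := ih u hu N hNu
      exact ⟨F, hF, hFN, fun N' hle h => ⟨u, hu, h' N' hle h⟩⟩

variable (R M)

/-- The subtype of finitely generated submodules. -/
abbrev FGsub := ↥{N : Submodule R M | N.FG}

/-- The induced (subspace) topology on the set of f.g. submodules. -/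
abbrev fgTop : TopologicalSpace (FGsub R M) :=
  TopologicalSpace.induced Subtype.val (zarModTop R M)

variable {R M}

lemma fg_key {U : Set (FGsub R M)} (hU : @IsOpen _ (fgTop R M) U) :
    ∀ a ∈ U, ∃ F : Set M, F.Finite ∧ F ⊆ (a.val : Set M) ∧
      ∀ b : FGsub R M, F ⊆ (b.val : Set M) → b ∈ U := by
  intro a ha
  obtain ⟨V, hV, rfl⟩ := hU
  obtain ⟨F, hF, hFa, h'⟩ := zar_key hV a.val ha
  exact ⟨F, hF, hFa, fun b hb => h' b.val hb⟩

lemma fg_upward {U : Set (FGsub R M)} (hU : @IsOpen _ (fgTop R M) U)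
    {a b : FGsub R M} (ha : a ∈ U) (hle : a.val ≤ b.val) : b ∈ U := by
  obtain ⟨F, _, hFa, h'⟩ := fg_key hU a ha
  exact h' b (hFa.trans hle)

lemma fg_basic_open (F : Set M) (hF : F.Finite) :
    @IsOpen _ (fgTop R M) {b : FGsub R M | F ⊆ (b.val : Set M)} :=
  ⟨{N : Submodule R M | F ⊆ (N : Set M)}, zar_basic_open F hF, rfl⟩

/-- Closure of a singleton in the subspace topology is the down-set. -/
lemma fg_closure_singleton (a b : FGsub R M) :
    b ∈ @closure _ (fgTop R M) {a} ↔ b.val ≤ a.val := by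
  letI := fgTop R M
  rw [mem_closure_iff]
  constructor
  · intro h
    intro x hx
    by_contra hxa
    obtain ⟨c, hc⟩ := h {d : FGsub R M | ({x} : Set M) ⊆ (d.val : Set M)}
      (fg_basic_open _ (finite_singleton x)) (singleton_subset_iff.mpr hx)
    rcases hc with ⟨hcmem, hceq⟩
    rw [mem_singleton_iff] at hceq
    subst hceq
    exact hxa (singleton_subset_iff.mp hcmem)
  · intro hle o ho hbo
    obtain ⟨F, _, hFb, h'⟩ := fg_key ho b hbo
    exact ⟨a, h' a (hFb.trans hle), rfl⟩

/-- The basic sets in the subspace are compact. -/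
lemma fg_basic_compact (F : Set M) (hF : F.Finite) :
    @IsCompact _ (fgTop R M) {b : FGsub R M | F ⊆ (b.val : Set M)} := by
  letI := fgTop R M
  rw [isCompact_iff_finite_subcover]
  intro ι U hUo hcov
  have hm : (⟨Submodule.span R F, Submodule.fg_span hF⟩ : FGsub R M) ∈
      {b : FGsub R M | F ⊆ (b.val : Set M)} := Submodule.subset_span
  obtain ⟨i, hi⟩ := mem_iUnion.mp (hcov hm)
  refine ⟨{i}, fun b hb => ?_⟩
  have : Submodule.span R F ≤ b.val := Submodule.span_le.mpr hb
  simp only [Finset.mem_singleton, iUnion_iUnion_eq_left]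
  exact fg_upward (hUo i) hi this

end Helpers

theorem stmt11 (R M : Type*) [CommRing R] [AddCommGroup M] [Module R M] :
    @Dense (Submodule R M) (patchOf (zarModTop R M)) {N : Submodule R M | N.FG} ∧
      (IsSpectral (↥{N : Submodule R M | N.FG})
          (TopologicalSpace.induced Subtype.val (zarModTop R M)) ↔
        IsNoetherian R M) := by
  constructor
  · -- density of f.g. submodules in the patch topology
    refine (@dense_iff_inter_open (Submodule R M) (patchOf (zarModTop R M)) {N : Submodule R M | N.FG}).mpr ?_
    rintro U hU ⟨N, hN⟩
    obtain ⟨F, hF, hFN, h'⟩ := patch_key hU N hN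
    exact ⟨Submodule.span R F, h' _ (Submodule.span_le.mpr hFN) Submodule.subset_span,
      Submodule.fg_span hF⟩
  · constructor
    · -- spectral → Noetherian
      rintro ⟨-, -, hsober, -⟩ 
      rw [isNoetherian_def]
      by_contra hnoeth
      push_neg at hnoeth
      obtain ⟨N, hN⟩ := hnoeth
      letI := fgTop R M
      set S : Set (FGsub R M) := {b | b.val ≤ N} with hS
      have hSc : IsClosed S := by
        rw [← isOpen_compl_iff]
        have : Sᶜ = ⋃ x ∈ ((N : Set M))ᶜ, {b : FGsub R M | ({x} : Set M) ⊆ (b.val : Set M)} := by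
          ext b
          simp only [hS, mem_compl_iff, mem_setOf_eq, mem_iUnion, singleton_subset_iff,
            SetLike.mem_coe]
          constructor
          · intro h
            rw [SetLike.le_def] at h
            push_neg at h
            obtain ⟨x, hx1, hx2⟩ := h
            exact ⟨x, hx2, hx1⟩
          · rintro ⟨x, hx1, hx2⟩ hle
            exact hx1 (hle hx2)
        rw [this]
        exact isOpen_biUnion fun x _ => fg_basic_open _ (finite_singleton x)
      have hSirr : IsIrreducible S := by
        constructor
        · exact ⟨⟨⊥, Submodule.fg_bot⟩, show (⊥ : Submodule R M) ≤ N from bot_le⟩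
        · rintro u v hu hv ⟨a, haS, hau⟩ ⟨b, hbS, hbv⟩
          have haN : a.val ≤ N := haS
          have hbN : b.val ≤ N := hbS
          exact ⟨⟨a.val ⊔ b.val, Submodule.FG.sup a.2 b.2⟩,
            show a.val ⊔ b.val ≤ N from sup_le haN hbN,
            fg_upward hu hau le_sup_left, fg_upward hv hbv le_sup_right⟩
      obtain ⟨η, hη⟩ := hsober.sober hSirr hSc
      have hηS : η ∈ S := hη ▸ subset_closure rfl
      have hηN : η.val ≤ N := hηS
      have hNη : N ≤ η.val := by
        intro x hx
        have hxS : (⟨Submodule.span R ({x} : Set M),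
            Submodule.fg_span (finite_singleton x)⟩ : FGsub R M) ∈ S :=
          Submodule.span_le.mpr (singleton_subset_iff.mpr hx)
        rw [← hη] at hxS
        have := (fg_closure_singleton η _).mp hxS
        exact this (Submodule.mem_span_singleton_self x)
      exact hN (le_antisymm hηN hNη ▸ η.2)
    · -- Noetherian → spectral
      intro hnoeth
      letI := fgTop R M
      refine ⟨?_, ?_, ?_, ?_⟩
      · -- compact
        constructor
        have : (univ : Set (FGsub R M)) = {b : FGsub R M | (∅ : Set M) ⊆ (b.val : Set M)} := by
          ext b; simp
        rw [this]
        exact fg_basic_compact ∅ finite_empty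
      · -- T0
        constructor
        intro x y hxy
        rw [inseparable_iff_forall_isOpen] at hxy
        refine Subtype.ext (SetLike.ext fun m => ?_)
        have := hxy {b : FGsub R M | ({m} : Set M) ⊆ (b.val : Set M)}
          (fg_basic_open _ (finite_singleton m))
        simpa using this
      · -- sober
        constructor
        intro S hSirr hScl
        have hdir : DirectedOn (· ≤ ·) (Subtype.val '' S) := by
          rintro _ ⟨a, haS, rfl⟩ _ ⟨b, hbS, rfl⟩
          obtain ⟨sa, hsa⟩ := a.2
          obtain ⟨sb, hsb⟩ := b.2
          have hao : @IsOpen _ (fgTop R M) {c : FGsub R M | (sa : Set M) ⊆ (c.val : Set M)} :=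
            fg_basic_open _ (sa.finite_toSet)
          have hbo : @IsOpen _ (fgTop R M) {c : FGsub R M | (sb : Set M) ⊆ (c.val : Set M)} :=
            fg_basic_open _ (sb.finite_toSet)
          have hmem : ∀ (c : FGsub R M) (s : Finset M), Submodule.span R (s : Set M) = c.val →
              c ∈ {c : FGsub R M | (s : Set M) ⊆ (c.val : Set M)} := by
            intro c s hs
            simp only [mem_setOf_eq]
            rw [← hs]
            exact Submodule.subset_span
          obtain ⟨c, hcS, hc1, hc2⟩ := hSirr.2 _ _ hao hbo ⟨a, haS, hmem a sa hsa⟩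
            ⟨b, hbS, hmem b sb hsb⟩
          refine ⟨c.val, ⟨c, hcS, rfl⟩, ?_, ?_⟩
          · rw [← hsa]; exact Submodule.span_le.mpr hc1
          · rw [← hsb]; exact Submodule.span_le.mpr hc2
        have hne : (Subtype.val '' S).Nonempty := hSirr.1.image _
        set η : Submodule R M := sSup (Subtype.val '' S) with hηdef
        have hηfg : η.FG := IsNoetherian.noetherian η
        refine ⟨⟨η, hηfg⟩, ?_⟩
        have hdown : ∀ b : FGsub R M, b.val ≤ η → b ∈ S := by
          intro b hb
          have hcpt : IsCompactElement b.val :=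
            (Submodule.fg_iff_compact _).mp b.2
          obtain ⟨x, hxmem, hbx⟩ :=
            (CompleteLattice.isCompactElement_iff_le_of_directed_sSup_le
              (α := Submodule R M) b.val).mp hcpt _ hne hdir hb
          obtain ⟨c, hcS, rfl⟩ := hxmem
          -- S is closed hence downward closed
          by_contra hbS
          exact (fg_upward (isOpen_compl_iff.mpr hScl) hbS hbx) hcS
        apply Set.ext
        intro b
        rw [fg_closure_singleton]
        exact ⟨fun h => hdown b h, fun h => le_sSup ⟨b, h, rfl⟩⟩
      · -- basis of compact opens
        refine ⟨{U : Set (FGsub R M) | ∃ F : Set M, F.Finite ∧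
          U = {b : FGsub R M | F ⊆ (b.val : Set M)}}, ?_, ?_, ?_⟩
        · rintro s ⟨F, hF, rfl⟩
          exact ⟨fg_basic_compact F hF, fg_basic_open F hF⟩
        · rintro s ⟨F, hF, rfl⟩ u ⟨G, hG, rfl⟩
          refine ⟨F ∪ G, hF.union hG, ?_⟩
          ext b
          simp [union_subset_iff]
        · refine TopologicalSpace.isTopologicalBasis_of_isOpen_of_nhds ?_ ?_
          · rintro s ⟨F, hF, rfl⟩
            exact fg_basic_open F hF
          · intro a u hau hu
            obtain ⟨F, hF, hFa, h'⟩ := fg_key hu a hau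
            exact ⟨{b : FGsub R M | F ⊆ (b.val : Set M)}, ⟨F, hF, rfl⟩, hFa, fun b hb => h' b hb⟩
end

section
/- Let R be a commutative ring and M a maximal ideal of R. Then M is an isolated point of the space of ideals I(R) endowed with the constructible topology if and only if M is a finitely generated ideal. -/
open Set TopologicalSpace

lemma zar_up {R : Type*} [CommRing R] {U : Set (Ideal R)}
    (hU : @IsOpen (Ideal R) (zarIdealTop R) U) :
    ∀ {I J : Ideal R}, I ≤ J → I ∈ U → J ∈ U := by
  induction hU with
  | basic s hs =>
    obtain ⟨F, hF, rfl⟩ := hs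
    intro I J hIJ hI
    exact fun x hx => hIJ (hI hx)
  | univ => intro I J _ _; trivial
  | inter s t _ _ ih1 ih2 => intro I J h hI; exact ⟨ih1 h hI.1, ih2 h hI.2⟩
  | sUnion S _ ih =>
    rintro I J h ⟨s, hs, hI⟩
    exact ⟨s, hs, ih s hs h hI⟩

lemma zar_exists_basic {R : Type*} [CommRing R] {U : Set (Ideal R)}
    (hU : @IsOpen (Ideal R) (zarIdealTop R) U) :
    ∀ {M : Ideal R}, M ∈ U →
      ∃ F : Set R, F.Finite ∧ F ⊆ (M : Set R) ∧ {I : Ideal R | F ⊆ (I : Set R)} ⊆ U := by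
  induction hU with
  | basic s hs =>
    obtain ⟨F, hF, rfl⟩ := hs
    intro M hM
    exact ⟨F, hF, hM, subset_rfl⟩
  | univ => intro M _; exact ⟨∅, finite_empty, empty_subset _, subset_univ _⟩
  | inter s t _ _ ih1 ih2 =>
    intro M hM
    obtain ⟨F1, h1, h1M, h1s⟩ := ih1 hM.1
    obtain ⟨F2, h2, h2M, h2s⟩ := ih2 hM.2
    refine ⟨F1 ∪ F2, h1.union h2, union_subset h1M h2M, fun I hI => ?_⟩
    exact ⟨h1s fun x hx => hI (Or.inl hx), h2s fun x hx => hI (Or.inr hx)⟩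
  | sUnion S _ ih =>
    rintro M ⟨s, hs, hM⟩
    obtain ⟨F, hF, hFM, hFs⟩ := ih s hs hM
    exact ⟨F, hF, hFM, hFs.trans (subset_sUnion_of_mem hs)⟩

lemma zar_basic_compact {R : Type*} [CommRing R] (F : Set R) :
    @IsCompact (Ideal R) (zarIdealTop R) {I : Ideal R | F ⊆ (I : Set R)} := by
  letI := zarIdealTop R
  apply isCompact_of_finite_subcover
  intro ι U hUo hcov
  have hspan : Ideal.span F ∈ {I : Ideal R | F ⊆ (I : Set R)} := Ideal.subset_span
  obtain ⟨i, hi⟩ := mem_iUnion.1 (hcov hspan)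
  refine ⟨{i}, fun I hI => mem_iUnion₂.2 ⟨i, Finset.mem_singleton_self i, ?_⟩⟩
  exact zar_up (hUo i) (Ideal.span_le.2 hI) hi

lemma zar_basic_open_s12 {R : Type*} [CommRing R] {F : Set R} (hF : F.Finite) :
    @IsOpen (Ideal R) (zarIdealTop R) {I : Ideal R | F ⊆ (I : Set R)} :=
  TopologicalSpace.isOpen_generateFrom_of_mem ⟨F, hF, rfl⟩

theorem stmt12 (R : Type*) [CommRing R] (M : Ideal R) (hM : M.IsMaximal) :
    @IsOpen (Ideal R) (patchOf (zarIdealTop R)) {M} ↔ M.FG := by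
  constructor
  · intro hopen
    letI := patchOf (zarIdealTop R)
    have hbasis := isTopologicalBasis_of_subbasis (s := {s : Set (Ideal R) |
      (@IsCompact (Ideal R) (zarIdealTop R) s ∧ @IsOpen (Ideal R) (zarIdealTop R) s) ∨
      (@IsCompact (Ideal R) (zarIdealTop R) sᶜ ∧ @IsOpen (Ideal R) (zarIdealTop R) sᶜ)}) rfl
    obtain ⟨v, ⟨f, ⟨hfin, hfsub⟩, rfl⟩, hMv, hvsub⟩ :=
      hbasis.exists_subset_of_mem_open (mem_singleton M) hopen
    -- for each s ∈ f, find a finite F ⊆ M forcing membership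
    have key : ∀ s ∈ f, ∃ F : Set R, F.Finite ∧ F ⊆ (M : Set R) ∧
        ∀ I : Ideal R, I ≤ M → F ⊆ (I : Set R) → I ∈ s := by
      intro s hs
      have hMs : M ∈ s := hMv s hs
      rcases hfsub hs with ⟨_, hso⟩ | ⟨_, hco⟩
      · obtain ⟨F, hF, hFM, hFs⟩ := zar_exists_basic hso hMs
        exact ⟨F, hF, hFM, fun I _ hFI => hFs hFI⟩
      · refine ⟨∅, finite_empty, empty_subset _, fun I hIM _ => ?_⟩
        by_contra h
        exact (zar_up hco hIM (by simpa using h)) hMs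
    choose! F hFin hFM hFmem using key
    set G : Set R := ⋃ s ∈ f, F s with hG
    have hGfin : G.Finite := hfin.biUnion fun s hs => hFin s hs
    have hGM : G ⊆ (M : Set R) := iUnion₂_subset fun s hs => hFM s hs
    have hJle : Ideal.span G ≤ M := Ideal.span_le.2 hGM
    have hJmem : Ideal.span G ∈ ⋂₀ f := by
      intro s hs
      have h1 : F s ⊆ G := by rw [hG]; exact subset_biUnion_of_mem hs
      exact hFmem s hs _ hJle (h1.trans Ideal.subset_span)
    have : Ideal.span G = M := hvsub hJmem
    exact ⟨hGfin.toFinset, by rw [hGfin.coe_toFinset]; exact this⟩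
  · intro hFG
    obtain ⟨S, hS⟩ := hFG
    have heq : ({M} : Set (Ideal R)) =
        {I : Ideal R | (↑S : Set R) ⊆ (I : Set R)} ∩
          {I : Ideal R | ({1} : Set R) ⊆ (I : Set R)}ᶜ := by
      ext I
      simp only [mem_singleton_iff, mem_inter_iff, mem_compl_iff, mem_setOf_eq,
        singleton_subset_iff, SetLike.mem_coe]
      constructor
      · intro h
        rw [h]
        exact ⟨by rw [← hS]; exact Ideal.subset_span,
          fun hone => hM.ne_top ((Ideal.eq_top_iff_one M).2 hone)⟩
      · rintro ⟨h1, h2⟩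
        exact (hM.eq_of_le ((Ideal.ne_top_iff_one I).2 h2)
          (by rw [← hS]; exact Ideal.span_le.2 h1)).symm
    rw [heq]
    letI := patchOf (zarIdealTop R)
    apply IsOpen.inter
    · exact TopologicalSpace.isOpen_generateFrom_of_mem
        (Or.inl ⟨zar_basic_compact _, zar_basic_open_s12 S.finite_toSet⟩)
    · exact TopologicalSpace.isOpen_generateFrom_of_mem
        (Or.inr ⟨by simpa using zar_basic_compact {(1:R)},
          by simpa using zar_basic_open_s12 (finite_singleton (1:R))⟩)
end

section
/- Let R be a Noetherian ring and I an ideal such that R/I is zero-dimensional (Artinian) and every maximal ideal containing I has finite residue field. Then I is an isolated point of the space I(R) of ideals of R, with respect to the constructible topology. -/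
open Set TopologicalSpace

-- finiteness extension lemma
lemma my_quot_ext_finite {A M : Type*} [Ring A] [AddCommGroup M] [Module A M]
    (S : Submodule A M) [Finite S] [Finite (M ⧸ S)] : Finite M := by
  have key : ∀ m : M, m - Quotient.out (Submodule.Quotient.mk (p := S) m) ∈ S := by
    intro m
    rw [← Submodule.Quotient.eq]
    exact (Quotient.out_eq' _).symm
  apply Finite.of_injective (fun m : M =>
    ((Submodule.Quotient.mk (p := S) m, ⟨m - Quotient.out (Submodule.Quotient.mk (p := S) m),
      key m⟩) : (M ⧸ S) × S))
  intro a b hab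
  have h1 : Submodule.Quotient.mk (p := S) a = Submodule.Quotient.mk (p := S) b :=
    congrArg Prod.fst hab
  have h2 := congrArg (fun p => (p.2 : M)) hab
  simp only at h2
  rw [h1] at h2
  exact by linear_combination (norm := abel) h2

-- step lemma
lemma my_step {A : Type*} [CommRing A] (C J : Ideal A) (hJ : J.FG)
    (hC : Finite (A ⧸ C)) (hAJ : Finite (A ⧸ J)) : Finite (A ⧸ (C * J)) := by
  classical
  set S : Ideal (A ⧸ (C * J)) := J.map (Ideal.Quotient.mk (C * J)) with hS
  have hle : C * J ≤ J := Ideal.mul_le_right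
  have hq : Finite ((A ⧸ (C * J)) ⧸ S) :=
    Finite.of_equiv _ (DoubleQuot.quotQuotEquivQuotOfLE hle).toEquiv.symm
  obtain ⟨s, hs⟩ := hJ
  have hfinS : Finite S := by
    set h : (s → (A ⧸ C)) → (A ⧸ (C * J)) := fun c =>
      Ideal.Quotient.mk (C * J) (∑ x : s, Quotient.out (c x) * (x : A)) with hh
    have hsub : (S : Set (A ⧸ (C * J))) ⊆ Set.range h := by
      intro b hb
      obtain ⟨y, hy, rfl⟩ := Ideal.mem_map_iff_of_surjective _
        Ideal.Quotient.mk_surjective |>.mp hb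
      rw [← hs] at hy
      obtain ⟨f, -, hf⟩ := Submodule.mem_span_finset.mp hy
      refine ⟨fun x => Ideal.Quotient.mk C (f x), ?_⟩
      rw [hh]
      simp only
      rw [Ideal.Quotient.eq]
      have hy2 : y = ∑ x : s, f (x : A) * (x : A) := by
        rw [← hf, ← Finset.sum_attach s (fun i => f i • i)]; rfl
      have : (∑ x : s, Quotient.out (Ideal.Quotient.mk C (f x)) * (x : A)) - y
          = ∑ x : s, (Quotient.out (Ideal.Quotient.mk C (f x)) - f x) * (x : A) := by
        rw [hy2, ← Finset.sum_sub_distrib]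
        exact Finset.sum_congr rfl fun x _ => (sub_mul _ _ _).symm
      rw [this]
      apply Ideal.sum_mem
      intro x _
      apply Ideal.mul_mem_mul
      · rw [← Ideal.Quotient.eq]
        exact Quotient.out_eq' _
      · rw [← hs]; exact Submodule.subset_span x.2
    have : (S : Set (A ⧸ (C * J))).Finite := (Set.finite_range h).subset hsub
    exact this.to_subtype
  exact my_quot_ext_finite S

lemma my_prod_finite {A : Type*} [CommRing A] [IsNoetherianRing A]
    (hfin : ∀ p : Ideal A, p.IsPrime → Finite (A ⧸ p)) (Z : Multiset (Ideal A)) :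
    (∀ p ∈ Z, p.IsPrime) → Finite (A ⧸ Z.prod) := by
  induction Z using Multiset.induction with
  | empty =>
    intro _
    have : Multiset.prod (0 : Multiset (Ideal A)) = ⊤ := by
      rw [Multiset.prod_zero, Ideal.one_eq_top]
    rw [this]
    have : Subsingleton (A ⧸ (⊤ : Ideal A)) :=
      Submodule.Quotient.subsingleton_iff.mpr rfl
    exact Finite.of_subsingleton
  | cons p Z ih =>
    intro hZ
    rw [Multiset.prod_cons]
    exact my_step p Z.prod (IsNoetherian.noetherian _)
      (hfin p (hZ p (Multiset.mem_cons_self p Z)))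
      (ih fun q hq => hZ q (Multiset.mem_cons_of_mem hq))

lemma my_fin_ring {A : Type*} [CommRing A] [IsNoetherianRing A]
    (hfin : ∀ p : Ideal A, p.IsPrime → Finite (A ⧸ p)) : Finite A := by
  obtain ⟨Z, hZ⟩ := PrimeSpectrum.exists_primeSpectrum_prod_le (R := A) ⊥
  have hprim : ∀ p ∈ Z.map PrimeSpectrum.asIdeal, p.IsPrime := by
    intro p hp
    obtain ⟨q, _, rfl⟩ := Multiset.mem_map.mp hp
    exact q.2
  have hfinq := my_prod_finite hfin (Z.map PrimeSpectrum.asIdeal) hprim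
  refine Finite.of_injective (Ideal.Quotient.mk ((Z.map PrimeSpectrum.asIdeal).prod)) ?_
  intro a b hab
  rw [Ideal.Quotient.eq] at hab
  have := hZ hab
  rwa [Ideal.mem_bot, sub_eq_zero] at this

lemma my_fin_quot (R : Type*) [CommRing R] [IsNoetherianRing R] (I : Ideal R)
    (hdim : ∀ P : Ideal R, P.IsPrime → I ≤ P → P.IsMaximal)
    (hres : ∀ P : Ideal R, P.IsMaximal → I ≤ P → Finite (R ⧸ P)) :
    Finite (R ⧸ I) := by
  apply my_fin_ring
  intro p hp
  set φ : R →+* (R ⧸ I) ⧸ p := (Ideal.Quotient.mk p).comp (Ideal.Quotient.mk I) with hφ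
  have hsurj : Function.Surjective φ :=
    (Ideal.Quotient.mk_surjective).comp Ideal.Quotient.mk_surjective
  have hker : RingHom.ker φ = p.comap (Ideal.Quotient.mk I) := by
    ext x
    simp [hφ, RingHom.mem_ker, Ideal.Quotient.eq_zero_iff_mem]
  have hIP : I ≤ p.comap (Ideal.Quotient.mk I) := fun x hx => by
    simp [Ideal.mem_comap, Ideal.Quotient.eq_zero_iff_mem.mpr hx]
  have hPprime : (p.comap (Ideal.Quotient.mk I)).IsPrime := Ideal.IsPrime.comap _
  have hfinP : Finite (R ⧸ p.comap (Ideal.Quotient.mk I)) :=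
    hres _ (hdim _ hPprime hIP) hIP
  have e : R ⧸ RingHom.ker φ ≃+* (R ⧸ I) ⧸ p := RingHom.quotientKerEquivOfSurjective hsurj
  rw [hker] at e
  exact Finite.of_equiv _ e.toEquiv

lemma my_fin_over (R : Type*) [CommRing R] (I : Ideal R) (h : Finite (R ⧸ I)) :
    {J : Ideal R | I ≤ J}.Finite := by
  have : Finite (Ideal (R ⧸ I)) :=
    Finite.of_injective (fun J : Ideal (R ⧸ I) => (J : Set (R ⧸ I))) SetLike.coe_injective
  have e := Ideal.relIsoOfSurjective (Ideal.Quotient.mk I) Ideal.Quotient.mk_surjective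
  have : Finite {p : Ideal R // Ideal.comap (Ideal.Quotient.mk I) ⊥ ≤ p} :=
    Finite.of_equiv _ e.toEquiv
  have hk : Ideal.comap (Ideal.Quotient.mk I) (⊥ : Ideal (R ⧸ I)) = I := by
    ext x; simp [Ideal.mem_comap, Ideal.mem_bot, Ideal.Quotient.eq_zero_iff_mem]
  rw [hk] at this
  rw [← Set.finite_coe_iff]
  exact this

-- topology lemmas
lemma my_zar_upclosed {R : Type*} [CommRing R] {U : Set (Ideal R)}
    (hU : TopologicalSpace.GenerateOpen
      {U : Set (Ideal R) | ∃ F : Set R, F.Finite ∧ U = {I : Ideal R | F ⊆ (I : Set R)}} U)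
    {J K : Ideal R} (hJK : J ≤ K) (hJ : J ∈ U) : K ∈ U := by
  induction hU with
  | basic s hs =>
    obtain ⟨F, _, rfl⟩ := hs
    exact fun x hx => hJK (hJ hx)
  | univ => trivial
  | inter s t _ _ ih1 ih2 => exact ⟨ih1 hJ.1, ih2 hJ.2⟩
  | sUnion S _ ih =>
    obtain ⟨s, hs, hJs⟩ := hJ
    exact ⟨s, hs, ih s hs hJs⟩

lemma my_B_compact_open {R : Type*} [CommRing R] {F : Set R} (hF : F.Finite) :
    @IsCompact (Ideal R) (zarIdealTop R) {J : Ideal R | F ⊆ (J : Set R)} ∧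
      @IsOpen (Ideal R) (zarIdealTop R) {J : Ideal R | F ⊆ (J : Set R)} := by
  constructor
  · refine @isCompact_of_finite_subcover (Ideal R) (zarIdealTop R) _ ?_
    intro ι U hU hcov
    have hmem : Ideal.span F ∈ {J : Ideal R | F ⊆ (J : Set R)} := Ideal.subset_span
    obtain ⟨i, hi⟩ := Set.mem_iUnion.mp (hcov hmem)
    refine ⟨{i}, fun J hJ => Set.mem_iUnion₂.mpr ⟨i, Finset.mem_singleton_self i, ?_⟩⟩
    exact my_zar_upclosed (hU i) (Ideal.span_le.mpr hJ) hi
  · exact TopologicalSpace.GenerateOpen.basic _ ⟨F, hF, rfl⟩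

lemma my_B_patch_open {R : Type*} [CommRing R] {F : Set R} (hF : F.Finite) :
    @IsOpen (Ideal R) (patchOf (zarIdealTop R)) {J : Ideal R | F ⊆ (J : Set R)} :=
  TopologicalSpace.GenerateOpen.basic _ (Or.inl (my_B_compact_open hF))

lemma my_Bc_patch_open {R : Type*} [CommRing R] {F : Set R} (hF : F.Finite) :
    @IsOpen (Ideal R) (patchOf (zarIdealTop R)) {J : Ideal R | F ⊆ (J : Set R)}ᶜ := by
  refine TopologicalSpace.GenerateOpen.basic _ (Or.inr ?_)
  rw [compl_compl]
  exact my_B_compact_open hF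

lemma my_up_patch_open {R : Type*} [CommRing R] [IsNoetherianRing R] (K : Ideal R) :
    @IsOpen (Ideal R) (patchOf (zarIdealTop R)) {J : Ideal R | K ≤ J} ∧
      @IsOpen (Ideal R) (patchOf (zarIdealTop R)) {J : Ideal R | K ≤ J}ᶜ := by
  obtain ⟨s, hs⟩ := IsNoetherian.noetherian K
  have hset : {J : Ideal R | K ≤ J} = {J : Ideal R | (↑s : Set R) ⊆ (J : Set R)} := by
    ext J
    simp only [Set.mem_setOf_eq, ← hs, Submodule.span_le]
  rw [hset]
  exact ⟨my_B_patch_open (s.finite_toSet), my_Bc_patch_open (s.finite_toSet)⟩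

theorem stmt14 (R : Type*) [CommRing R] [IsNoetherianRing R] (I : Ideal R)
    (hdim : ∀ P : Ideal R, P.IsPrime → I ≤ P → P.IsMaximal)
    (hres : ∀ P : Ideal R, P.IsMaximal → I ≤ P → Finite (R ⧸ P)) :
    @IsOpen (Ideal R) (patchOf (zarIdealTop R)) {I} := by
  have hfq : Finite (R ⧸ I) := my_fin_quot R I hdim hres
  have hT : {J : Ideal R | I < J}.Finite :=
    (my_fin_over R I hfq).subset (fun J hJ => show I ≤ J from le_of_lt (show I < J from hJ))
  have heq : ({I} : Set (Ideal R)) =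
      {J : Ideal R | I ≤ J} ∩ ⋂ J ∈ {J : Ideal R | I < J}, {K : Ideal R | J ≤ K}ᶜ := by
    ext x
    simp only [Set.mem_singleton_iff, Set.mem_inter_iff, Set.mem_iInter, Set.mem_compl_iff,
      Set.mem_setOf_eq]
    constructor
    · rintro rfl
      exact ⟨le_rfl, fun J hJ hJx => absurd (lt_of_lt_of_le hJ hJx) (lt_irrefl _)⟩
    · rintro ⟨h1, h2⟩
      by_contra hne
      exact h2 x (lt_of_le_of_ne h1 (Ne.symm hne)) le_rfl
  rw [heq]
  letI : TopologicalSpace (Ideal R) := patchOf (zarIdealTop R)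
  exact IsOpen.inter (my_up_patch_open I).1
    (hT.isOpen_biInter fun J _ => (my_up_patch_open J).2)
end

section
/- Let R be a Noetherian ring. The set Princ(R) of principal ideals of R is dense in the space I(R) of ideals of R, with respect to the constructible topology, if and only if R is a principal ideal ring. -/
open Set TopologicalSpace

section Aux

variable {R : Type*} [CommRing R]

/-- The basic open set of ideals containing `F`. -/
private def BF (F : Set R) : Set (Ideal R) := {I : Ideal R | F ⊆ (I : Set R)}

private lemma zar_open_upclosed {U : Set (Ideal R)} (h : @IsOpen _ (zarIdealTop R) U) :
    ∀ ⦃I J : Ideal R⦄, I ≤ J → I ∈ U → J ∈ U := by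
  change TopologicalSpace.GenerateOpen _ U at h
  induction h with
  | basic s hs =>
    obtain ⟨F, _, rfl⟩ := hs
    exact fun I J hIJ hI x hx => hIJ (hI hx)
  | univ => exact fun I J _ _ => trivial
  | inter s t _ _ ihs iht => exact fun I J hIJ hI => ⟨ihs hIJ hI.1, iht hIJ hI.2⟩
  | sUnion S _ ih =>
    rintro I J hIJ ⟨s, hs, hIs⟩
    exact ⟨s, hs, ih s hs hIJ hIs⟩

private lemma BF_open {F : Set R} (hF : F.Finite) : @IsOpen _ (zarIdealTop R) (BF F) :=
  TopologicalSpace.isOpen_generateFrom_of_mem ⟨F, hF, rfl⟩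

private lemma BF_compact (F : Set R) : @IsCompact _ (zarIdealTop R) (BF F) := by
  letI := zarIdealTop R
  apply isCompact_of_finite_subcover
  intro ι U hU hcov
  have hmem : Ideal.span F ∈ BF F := fun x hx => Ideal.subset_span hx
  obtain ⟨i, hi⟩ := Set.mem_iUnion.mp (hcov hmem)
  refine ⟨{i}, fun J hJ => Set.mem_iUnion₂.mpr ⟨i, Finset.mem_singleton_self i, ?_⟩⟩
  exact zar_open_upclosed (hU i) (Ideal.span_le.mpr hJ) hi

private lemma singleton_patch_open [IsNoetherianRing R] {M : Ideal R} (hM : M.IsMaximal) :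
    @IsOpen _ (patchOf (zarIdealTop R)) {M} := by
  letI := patchOf (zarIdealTop R)
  obtain ⟨F, hF⟩ : M.FG := IsNoetherian.noetherian M
  have h1 : {M} = BF (↑F : Set R) ∩ (BF {(1 : R)})ᶜ := by
    ext J
    simp only [Set.mem_singleton_iff, Set.mem_inter_iff, Set.mem_compl_iff, BF,
      Set.mem_setOf_eq, Set.singleton_subset_iff, SetLike.mem_coe]
    constructor
    · rintro rfl
      refine ⟨by rw [← hF]; exact Ideal.subset_span, fun h => hM.ne_top ?_⟩
      rwa [Ideal.eq_top_iff_one]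
    · rintro ⟨hFJ, h1J⟩
      have hMJ : M ≤ J := by rw [← hF]; exact Ideal.span_le.mpr hFJ
      rcases hM.eq_of_le (fun hJ => h1J (by rw [hJ]; trivial)) hMJ with h
      exact h.symm
  rw [h1]
  have hopen1 : @IsOpen _ (patchOf (zarIdealTop R)) (BF (↑F : Set R)) :=
    TopologicalSpace.isOpen_generateFrom_of_mem (Or.inl ⟨BF_compact _, BF_open F.finite_toSet⟩)
  have hopen2 : @IsOpen _ (patchOf (zarIdealTop R)) (BF {(1 : R)})ᶜ :=
    TopologicalSpace.isOpen_generateFrom_of_mem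
      (Or.inr (by rw [compl_compl]; exact ⟨BF_compact _, BF_open (Set.finite_singleton 1)⟩))
  exact hopen1.inter hopen2

private lemma isPrime_of_maximal_nonPrincipal {P : Ideal R}
    (hP : ¬ P.IsPrincipal) (hmax : ∀ J : Ideal R, P < J → J.IsPrincipal) : P.IsPrime := by
  constructor
  · rintro rfl
    exact hP ⟨1, (Ideal.span_singleton_one).symm⟩
  · intro a b hab
    by_contra h
    push_neg at h
    obtain ⟨ha, hb⟩ := h
    have hI1 : P < P ⊔ Ideal.span {a} := lt_of_le_of_ne le_sup_left (by
      intro he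
      exact ha (he ▸ Submodule.mem_sup_right (Ideal.subset_span (Set.mem_singleton a))))
    obtain ⟨α, hα⟩ := hmax _ hI1
    have hPα : P ≤ Ideal.span {α} := by
      rw [← Ideal.submodule_span_eq, ← hα]; exact le_sup_left
    -- the colon ideal
    have hI2 : P < P.colon (Ideal.span {α}) := by
      refine lt_of_le_of_ne (fun p hp => Ideal.mem_colon_span_singleton.mpr (Ideal.mul_mem_right α P hp)) ?_
      intro he
      apply hb
      rw [he]
      rw [Ideal.mem_colon_span_singleton]
      -- b * α ∈ P : α ∈ P ⊔ span {a}
      have hαmem : α ∈ P ⊔ Ideal.span {a} := by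
        rw [hα]; exact Submodule.mem_span_singleton_self α
      obtain ⟨p, hp, q, hq, hpq⟩ := Submodule.mem_sup.mp hαmem
      obtain ⟨r, rfl⟩ := Ideal.mem_span_singleton'.mp hq
      rw [← hpq, mul_add]
      refine P.add_mem (Ideal.mul_mem_left P b hp) ?_
      have : b * (r * a) = r * (a * b) := by ring
      rw [this]
      exact Ideal.mul_mem_left P r hab
    obtain ⟨β, hβ⟩ := hmax _ hI2
    apply hP
    refine ⟨α * β, le_antisymm ?_ ?_⟩
    · intro p hp
      obtain ⟨t, ht⟩ := Ideal.mem_span_singleton'.mp (hPα hp)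
      have htI2 : t ∈ P.colon (Ideal.span {α}) := Ideal.mem_colon_span_singleton.mpr (by rwa [ht])
      obtain ⟨u, hu⟩ := Ideal.mem_span_singleton'.mp (hβ ▸ htI2)
      rw [Ideal.submodule_span_eq, Ideal.mem_span_singleton']
      exact ⟨u, by rw [← ht, ← hu]; ring⟩
    · rw [Ideal.submodule_span_eq, Ideal.span_le, Set.singleton_subset_iff]
      have hβI2 : β ∈ P.colon (Ideal.span {α}) := hβ ▸ Ideal.subset_span (Set.mem_singleton β)
      have := Ideal.mem_colon_span_singleton.mp hβI2
      rwa [SetLike.mem_coe, mul_comm]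

/-- Kaplansky: a Noetherian commutative ring whose maximal ideals are all principal is a
principal ideal ring. -/
private lemma pir_of_maximal_principal [IsNoetherianRing R]
    (hmax : ∀ M : Ideal R, M.IsMaximal → M.IsPrincipal) : IsPrincipalIdealRing R := by
  by_contra hnp
  have hne : (Ideal.nonPrincipals R).Nonempty := by
    rcases Set.eq_empty_or_nonempty (Ideal.nonPrincipals R) with h | h
    · exact absurd (Ideal.nonPrincipals_eq_empty_iff.mp h) hnp
    · exact h
  obtain ⟨P, hPmem, hPmax⟩ :=
    (wellFounded_gt (α := Ideal R)).has_min (Ideal.nonPrincipals R) hne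
  change ¬ P.IsPrincipal at hPmem
  have hmaxP : ∀ J : Ideal R, P < J → J.IsPrincipal := by
    intro J hJ
    by_contra hJn
    exact hPmax J hJn hJ
  have hprime : P.IsPrime := isPrime_of_maximal_nonPrincipal hPmem hmaxP
  -- P is contained in a maximal ideal M = (m)
  obtain ⟨M, hM, hPM⟩ := Ideal.exists_le_maximal P hprime.ne_top
  obtain ⟨m, hm⟩ := hmax M hM
  rw [Ideal.submodule_span_eq] at hm
  have hmP : m ∉ P := by
    intro hmem
    apply hPmem
    have : M = P := le_antisymm (by rw [hm, Ideal.span_le, Set.singleton_subset_iff]; exact hmem) hPM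
    exact ⟨m, by rw [← this, hm, Ideal.submodule_span_eq]⟩
  -- P ≤ M • P
  have hle : P ≤ M • P := by
    intro p hp
    have hpM : p ∈ Ideal.span {m} := hm ▸ hPM hp
    obtain ⟨t, ht⟩ := Ideal.mem_span_singleton'.mp hpM
    have htP : t ∈ P := by
      rcases hprime.mem_or_mem (show t * m ∈ P by rwa [ht]) with h | h
      · exact h
      · exact absurd h hmP
    have : p = m * t := by rw [← ht]; ring
    rw [this, Ideal.smul_eq_mul]
    exact Ideal.mul_mem_mul (by rw [hm]; exact Ideal.subset_span rfl) htP
  obtain ⟨z, hz1, hz0⟩ :=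
    Submodule.exists_sub_one_mem_and_smul_eq_zero_of_fg_of_le_smul M P (IsNoetherian.noetherian P) hle
  have hzP : z ∉ P := by
    intro hzmem
    apply hM.ne_top
    rw [Ideal.eq_top_iff_one]
    have : (1 : R) = z - (z - 1) := by ring
    rw [this]
    exact M.sub_mem (hPM hzmem) hz1
  -- Q = P ⊔ (z) is strictly bigger, hence principal
  have hQ : P < P ⊔ Ideal.span {z} := lt_of_le_of_ne le_sup_left (by
    intro he
    exact hzP (he ▸ Submodule.mem_sup_right (Ideal.subset_span (Set.mem_singleton z))))
  obtain ⟨s, hs⟩ := hmaxP _ hQ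
  rw [Ideal.submodule_span_eq] at hs
  have hsP : s ∉ P := by
    intro hmem
    refine absurd (le_trans (le_of_eq hs) ?_) (not_le_of_gt hQ)
    rw [Ideal.span_le, Set.singleton_subset_iff]
    exact hmem
  -- P = P²
  have hP2 : P ≤ P • P := by
    intro p hp
    have hps : p ∈ Ideal.span {s} := by rw [← hs]; exact Submodule.mem_sup_left hp
    obtain ⟨t, ht⟩ := Ideal.mem_span_singleton'.mp hps
    have htP : t ∈ P := by
      rcases hprime.mem_or_mem (show t * s ∈ P by rwa [ht]) with h | h
      · exact h
      · exact absurd h hsP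
    -- s = p₀ + u*z with p₀ ∈ P
    have hsmem : s ∈ P ⊔ Ideal.span {z} := by
      rw [hs]; exact Submodule.mem_span_singleton_self s
    obtain ⟨p₀, hp₀, q, hq, hpq⟩ := Submodule.mem_sup.mp hsmem
    obtain ⟨u, rfl⟩ := Ideal.mem_span_singleton'.mp hq
    have hzt : z * t = 0 := by
      have := hz0 t htP
      rwa [smul_eq_mul] at this
    have hpeq : p = t * p₀ := by
      rw [← ht, ← hpq, mul_add]
      have : t * (u * z) = u * (z * t) := by ring
      rw [this, hzt, mul_zero, add_zero]
    rw [hpeq, Ideal.smul_eq_mul]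
    exact Ideal.mul_mem_mul htP hp₀
  obtain ⟨e', he1, he0⟩ :=
    Submodule.exists_sub_one_mem_and_smul_eq_zero_of_fg_of_le_smul P P (IsNoetherian.noetherian P) hP2
  -- e := 1 - e' ∈ P and e * p = p for all p ∈ P
  apply hPmem
  refine ⟨1 - e', le_antisymm ?_ ?_⟩
  · intro p hp
    rw [Ideal.submodule_span_eq, Ideal.mem_span_singleton']
    refine ⟨p, ?_⟩
    have h := he0 p hp
    rw [smul_eq_mul] at h
    calc p * (1 - e') = p - e' * p := by ring
      _ = p := by rw [h, sub_zero]
  · rw [Ideal.submodule_span_eq, Ideal.span_le, Set.singleton_subset_iff]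
    have : (1 : R) - e' = -(e' - 1) := by ring
    rw [this]
    exact P.neg_mem (by simpa using he1)

end Aux

theorem stmt16 (R : Type*) [CommRing R] [IsNoetherianRing R] :
    @Dense (Ideal R) (patchOf (zarIdealTop R))
        {I : Ideal R | Submodule.IsPrincipal I} ↔
      IsPrincipalIdealRing R := by
  letI := patchOf (zarIdealTop R)
  constructor
  · intro hdense
    apply pir_of_maximal_principal
    intro M hM
    have hMc := hdense M
    rw [_root_.mem_closure_iff] at hMc
    obtain ⟨J, hJM, hJP⟩ := hMc {M} (singleton_patch_open hM) rfl
    rw [Set.mem_singleton_iff] at hJM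
    exact hJM ▸ hJP
  · intro hpir
    have : {I : Ideal R | Submodule.IsPrincipal I} = Set.univ :=
      Set.eq_univ_of_forall fun I => hpir.principal I
    rw [this]
    exact dense_univ
end

section
/- Let R be a commutative ring. If the set Princ(R) of principal ideals of R is closed in the constructible topology of the ideal space I(R), then R satisfies the ascending chain condition on principal ideals. -/
open Set TopologicalSpace

lemma zar_basis_up {R : Type*} [CommRing R] {U : Set (Ideal R)}
    (hU : TopologicalSpace.GenerateOpen
      {U : Set (Ideal R) | ∃ F : Set R, F.Finite ∧ U = {I : Ideal R | F ⊆ (I : Set R)}} U) :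
    ∀ ⦃I J : Ideal R⦄, I ≤ J → I ∈ U → J ∈ U := by
  induction hU with
  | basic s hs =>
    obtain ⟨F, _, rfl⟩ := hs
    exact fun I J hIJ hI x hx => hIJ (hI hx)
  | univ => exact fun I J _ _ => trivial
  | inter s t _ _ ihs iht => exact fun I J h hI => ⟨ihs h hI.1, iht h hI.2⟩
  | sUnion S _ ih =>
    rintro I J h ⟨s, hs, hIs⟩
    exact ⟨s, hs, ih s hs h hIs⟩

lemma zar_sup_mem {R : Type*} [CommRing R] (S : ℕ →o Ideal R) {U : Set (Ideal R)}
    (hU : TopologicalSpace.GenerateOpen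
      {U : Set (Ideal R) | ∃ F : Set R, F.Finite ∧ U = {I : Ideal R | F ⊆ (I : Set R)}} U)
    (hJ : (⨆ n, S n) ∈ U) : ∃ n, S n ∈ U := by
  induction hU with
  | basic s hs =>
    obtain ⟨F, hF, rfl⟩ := hs
    refine Set.Finite.induction_on_subset (motive := fun G _ => ∃ n, S n ∈ {I : Ideal R | G ⊆ (I : Set R)}) F hF ⟨0, by simp⟩ ?_
    rintro x G hxF _ _ ⟨n, hn⟩
    obtain ⟨m, hm⟩ := (Submodule.mem_iSup_of_chain S x).mp (hJ hxF)
    exact ⟨max n m, Set.insert_subset (S.monotone (le_max_right n m) hm)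
      (hn.trans (S.monotone (le_max_left n m)))⟩
  | univ => exact ⟨0, trivial⟩
  | inter s t hso hto ihs iht =>
    obtain ⟨n, hn⟩ := ihs hJ.1
    obtain ⟨m, hm⟩ := iht hJ.2
    exact ⟨max n m, zar_basis_up hso (S.monotone (le_max_left n m)) hn,
      zar_basis_up hto (S.monotone (le_max_right n m)) hm⟩
  | sUnion T hT ih =>
    obtain ⟨s, hs, hJs⟩ := hJ
    obtain ⟨n, hn⟩ := ih s hs hJs
    exact ⟨n, s, hs, hn⟩

theorem stmt17 (R : Type*) [CommRing R]
    (hcl : @IsClosed (Ideal R) (patchOf (zarIdealTop R))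
      {I : Ideal R | Submodule.IsPrincipal I}) :
    ∀ a : ℕ → R, (∀ n, Ideal.span {a n} ≤ Ideal.span {a (n + 1)}) →
      ∃ N, ∀ n, N ≤ n → Ideal.span {a n} = Ideal.span {a N} := by
  intro a hmono
  set S : ℕ →o Ideal R :=
    ⟨fun n => Ideal.span {a n}, monotone_nat_of_le_succ hmono⟩ with hS
  set J : Ideal R := ⨆ n, S n with hJdef
  have hmem : J ∈ {I : Ideal R | Submodule.IsPrincipal I} := by
    rw [← @IsClosed.closure_eq (Ideal R) (patchOf (zarIdealTop R)) _ hcl]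
    refine (@mem_closure_iff (Ideal R) (patchOf (zarIdealTop R)) J _).mpr ?_
    intro o ho hJo
    have ho' : TopologicalSpace.GenerateOpen
        {s : Set (Ideal R) | (@IsCompact _ (zarIdealTop R) s ∧ @IsOpen _ (zarIdealTop R) s) ∨
          (@IsCompact _ (zarIdealTop R) sᶜ ∧ @IsOpen _ (zarIdealTop R) sᶜ)} o := ho
    have key : ∀ U, TopologicalSpace.GenerateOpen
        {s : Set (Ideal R) | (@IsCompact _ (zarIdealTop R) s ∧ @IsOpen _ (zarIdealTop R) s) ∨
          (@IsCompact _ (zarIdealTop R) sᶜ ∧ @IsOpen _ (zarIdealTop R) sᶜ)} U →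
        J ∈ U → ∃ n, ∀ m, n ≤ m → S m ∈ U := by
      intro U hU
      induction hU with
      | basic s hs =>
        intro hJs
        rcases hs with ⟨_, hso⟩ | ⟨_, hsc⟩
        · obtain ⟨n, hn⟩ := zar_sup_mem S hso hJs
          exact ⟨n, fun m hm => zar_basis_up hso (S.monotone hm) hn⟩
        · refine ⟨0, fun m _ => ?_⟩
          by_contra hc
          exact zar_basis_up hsc (le_iSup (fun n => (S n : Ideal R)) m) hc hJs
      | univ => exact fun _ => ⟨0, fun _ _ => trivial⟩
      | inter s t _ _ ihs iht =>
        rintro ⟨h1, h2⟩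
        obtain ⟨n, hn⟩ := ihs h1
        obtain ⟨m, hm⟩ := iht h2
        exact ⟨max n m, fun k hk => ⟨hn k (le_of_max_le_left hk), hm k (le_of_max_le_right hk)⟩⟩
      | sUnion T hT ih =>
        rintro ⟨s, hs, hJs⟩
        obtain ⟨n, hn⟩ := ih s hs hJs
        exact ⟨n, fun m hm => ⟨s, hs, hn m hm⟩⟩
    obtain ⟨n, hn⟩ := key o ho' hJo
    exact ⟨S n, hn n le_rfl, ⟨a n, rfl⟩⟩
  obtain ⟨b, hb⟩ := hmem
  have hbJ : b ∈ J := hb ▸ Submodule.mem_span_singleton_self b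
  obtain ⟨N, hN⟩ := (Submodule.mem_iSup_of_chain S b).mp hbJ
  refine ⟨N, fun n hn => le_antisymm ?_ (S.monotone hn)⟩
  calc S n ≤ J := le_iSup (fun k => (S k : Ideal R)) n
    _ = Ideal.span {b} := hb
    _ ≤ S N := by rwa [Ideal.span_le, Set.singleton_subset_iff]
end
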